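/- arXiv:1808.07550 — 8 statements merged into one kernel-verified Lean document; each statement's English description precedes it below -/
import Mathlib

section
/- Let c be a complex number with Re(c) < -1. Then the topological closure in ℂ of the set {σ_c(n) : n ∈ ℕ+} equals the set {Σ_c(α) : α a function from the set of primes to ℕ ∪ {∞}}. -/
open scoped BigOperators

/-- The divisor function `σ_c(n) = ∑_{d ∣ n} d^c` for complex `c`. -/
noncomputable def sigmaC (c : ℂ) (n : ℕ) : ℂ := ∑ d ∈ n.divisors, (d : ℂ) ^ c

/-- `f_p(k) = σ_c(p^k) = ∑_{j=0}^k p^{cj}` for finite `k`, and `f_p(∞) = (1 - p^c)⁻¹`. -/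
noncomputable def fC (c : ℂ) (p : ℕ) (k : ℕ∞) : ℂ :=
  if k = ⊤ then (1 - (p : ℂ) ^ c)⁻¹
  else ∑ j ∈ Finset.range (k.toNat + 1), (p : ℂ) ^ (c * (j : ℂ))

/-- The value of `σ_c` on the Steinitz number encoded by `α`. -/
noncomputable def steinitzValC (c : ℂ) (α : Nat.Primes → ℕ∞) : ℂ :=
  ∏' p : Nat.Primes, fC c (p : ℕ) (α p)

namespace SP
open Complex Filter Topology Finset

variable {c : ℂ}

lemma fC_coe (c : ℂ) (p : ℕ) (n : ℕ) :
    fC c p (n : ℕ∞) = ∑ j ∈ Finset.range (n + 1), ((p : ℂ) ^ c) ^ j := by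
  rw [fC, if_neg (by simp)]
  simp only [ENat.toNat_coe]
  refine Finset.sum_congr rfl fun j _ => ?_
  rw [mul_comm, Complex.cpow_nat_mul]

lemma fC_top (c : ℂ) (p : ℕ) : fC c p ⊤ = (1 - (p : ℂ) ^ c)⁻¹ := by
  rw [fC, if_pos rfl]

lemma fC_zero (c : ℂ) (p : ℕ) : fC c p 0 = 1 := by
  have : ((0 : ℕ) : ℕ∞) = 0 := rfl
  rw [← this, fC_coe]
  simp

lemma norm_x {p : ℕ} (hp : 2 ≤ p) : ‖(p : ℂ) ^ c‖ = (p : ℝ) ^ c.re :=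
  Complex.norm_natCast_cpow_of_pos (by omega) c

lemma norm_x_le_r (hc : c.re < -1) {p : ℕ} (hp : 2 ≤ p) :
    ‖(p : ℂ) ^ c‖ ≤ (2 : ℝ) ^ c.re := by
  rw [norm_x hp]
  exact Real.rpow_le_rpow_of_nonpos (by norm_num) (by exact_mod_cast hp) (by linarith)

lemma r_lt_half (hc : c.re < -1) : (2 : ℝ) ^ c.re < 1 / 2 := by
  have h := Real.rpow_lt_rpow_of_exponent_lt (by norm_num : (1:ℝ) < 2) hc
  rwa [Real.rpow_neg_one, show ((2:ℝ))⁻¹ = 1 / 2 by norm_num] at h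

/-- Uniform bound on `fC - 1`. -/
lemma norm_fC_sub_one_le (hc : c.re < -1) {p : ℕ} (hp : 2 ≤ p) (k : ℕ∞) :
    ‖fC c p k - 1‖ ≤ 2 * ‖(p : ℂ) ^ c‖ := by
  set x : ℂ := (p : ℂ) ^ c with hxdef
  have hx : ‖x‖ < 1 := lt_of_le_of_lt (norm_x_le_r hc hp) (by linarith [r_lt_half hc])
  have hxhalf : ‖x‖ ≤ 1 / 2 := le_trans (norm_x_le_r hc hp) (r_lt_half hc).le
  have hinv : (1 - ‖x‖)⁻¹ ≤ 2 := by
    rw [inv_le_comm₀ (by linarith) (by norm_num)]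
    linarith
  have key : ‖fC c p k - 1‖ ≤ ‖x‖ * (1 - ‖x‖)⁻¹ := by
    induction k using ENat.recTopCoe with
    | top =>
      rw [fC_top]
      have hle : 1 - ‖x‖ ≤ ‖1 - x‖ := by
        calc 1 - ‖x‖ = ‖(1:ℂ)‖ - ‖x‖ := by simp
          _ ≤ ‖1 - x‖ := norm_sub_norm_le 1 x
      have h1 : (1 : ℂ) - x ≠ 0 := by
        intro h; rw [h, norm_zero] at hle; linarith
      have : (1 - x)⁻¹ - 1 = x * (1 - x)⁻¹ := by field_simp; ring
      rw [this, norm_mul, norm_inv]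
      have hpos : (0:ℝ) < 1 - ‖x‖ := by linarith
      gcongr
    | coe n =>
      rw [fC_coe, Finset.sum_range_succ' (fun j => x ^ j) n]
      simp only [pow_zero, add_sub_cancel_right]
      calc ‖∑ j ∈ Finset.range n, x ^ (j + 1)‖
          ≤ ∑ j ∈ Finset.range n, ‖x‖ ^ (j+1) := by
            refine (norm_sum_le _ _).trans ?_
            exact Finset.sum_le_sum fun j _ => by rw [norm_pow]
        _ = ‖x‖ * ∑ j ∈ Finset.range n, ‖x‖ ^ j := by
            rw [Finset.mul_sum]; exact Finset.sum_congr rfl fun j _ => by ring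
        _ ≤ ‖x‖ * (1 - ‖x‖)⁻¹ := by
            refine mul_le_mul_of_nonneg_left ?_ (norm_nonneg x)
            exact Summable.sum_le_tsum _ (fun j _ => by positivity)
              (summable_geometric_of_lt_one (norm_nonneg x) hx) |>.trans
              (by rw [tsum_geometric_of_lt_one (norm_nonneg x) hx])
  calc ‖fC c p k - 1‖ ≤ ‖x‖ * (1 - ‖x‖)⁻¹ := key
    _ ≤ ‖x‖ * 2 := by gcongr
    _ = 2 * ‖x‖ := by ring

lemma norm_fC_sub_one_lt_one (hc : c.re < -1) {p : ℕ} (hp : 2 ≤ p) (k : ℕ∞) :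
    ‖fC c p k - 1‖ < 1 := by
  have h1 := norm_fC_sub_one_le hc hp k
  have h2 := norm_x_le_r hc (c := c) hp
  have h3 := r_lt_half hc
  have h4 := norm_nonneg ((p:ℂ)^c)
  linarith

lemma fC_ne_zero (hc : c.re < -1) {p : ℕ} (hp : 2 ≤ p) (k : ℕ∞) : fC c p k ≠ 0 := by
  intro h
  have := norm_fC_sub_one_lt_one hc hp k
  rw [h] at this
  simp at this

lemma fC_re_pos (hc : c.re < -1) {p : ℕ} (hp : 2 ≤ p) (k : ℕ∞) : 0 < (fC c p k).re := by
  have h := norm_fC_sub_one_lt_one hc hp k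
  have habs : |(fC c p k - 1).re| < 1 :=
    lt_of_le_of_lt (Complex.abs_re_le_norm _) h
  have hre : (fC c p k - 1).re = (fC c p k).re - 1 := by simp
  rw [hre] at habs
  have := (abs_lt.mp habs).1
  linarith

/-- Bound on the log of fC. -/
lemma norm_log_fC_le (hc : c.re < -1) {p : ℕ} (hp : 2 ≤ p) (k : ℕ∞) :
    ‖Complex.log (fC c p k)‖
      ≤ (2 * (2:ℝ)^c.re * (1 - 2*(2:ℝ)^c.re)⁻¹ + 2) * (p : ℝ) ^ c.re := by
  have hrhalf := r_lt_half hc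
  have hr0 : (0:ℝ) < (2:ℝ) ^ c.re := Real.rpow_pos_of_pos (by norm_num) _
  set z : ℂ := fC c p k - 1 with hz
  have hzb : ‖z‖ ≤ 2 * ‖(p:ℂ)^c‖ := norm_fC_sub_one_le hc hp k
  have hxr : ‖(p:ℂ)^c‖ ≤ (2:ℝ)^c.re := norm_x_le_r hc hp
  have hzR : ‖z‖ ≤ 2 * (2:ℝ)^c.re := hzb.trans (by linarith)
  have hz1 : ‖z‖ < 1 := lt_of_le_of_lt hzR (by linarith)
  have hfc : fC c p k = 1 + z := by rw [hz]; ring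
  rw [hfc]
  refine (Complex.norm_log_one_add_le hz1).trans ?_
  have hxre : ‖(p:ℂ)^c‖ = (p:ℝ)^c.re := norm_x hp
  have h1 : ‖z‖^2 * (1-‖z‖)⁻¹/2 + ‖z‖ ≤ ‖z‖ * ((2*(2:ℝ)^c.re) * (1 - 2*(2:ℝ)^c.re)⁻¹ / 2 + 1) := by
    have hRpos : (0:ℝ) < 1 - 2*(2:ℝ)^c.re := by linarith
    have hinvle : (1-‖z‖)⁻¹ ≤ (1 - 2*(2:ℝ)^c.re)⁻¹ := by
      apply inv_anti₀ hRpos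
      linarith
    have t1 : ‖z‖ * ‖z‖ ≤ ‖z‖ * (2*(2:ℝ)^c.re) := mul_le_mul_of_nonneg_left hzR (norm_nonneg z)
    have t2 : ‖z‖ * ‖z‖ * (1-‖z‖)⁻¹ ≤ ‖z‖ * (2*(2:ℝ)^c.re) * (1 - 2*(2:ℝ)^c.re)⁻¹ := by
      apply mul_le_mul t1 hinvle (inv_nonneg.mpr (by linarith)) (by positivity)
    have : ‖z‖^2 * (1-‖z‖)⁻¹/2 ≤ ‖z‖ * ((2*(2:ℝ)^c.re) * (1 - 2*(2:ℝ)^c.re)⁻¹ / 2) := by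
      rw [sq]; linarith
    linarith
  refine h1.trans ?_
  have hzp : ‖z‖ ≤ 2 * (p:ℝ)^c.re := by rw [← hxre]; exact hzb
  have hRpos : (0:ℝ) < 1 - 2*(2:ℝ)^c.re := by linarith
  have hK : (0:ℝ) ≤ (2*(2:ℝ)^c.re) * (1 - 2*(2:ℝ)^c.re)⁻¹ / 2 + 1 := by positivity
  calc ‖z‖ * ((2*(2:ℝ)^c.re) * (1 - 2*(2:ℝ)^c.re)⁻¹ / 2 + 1)
      ≤ (2 * (p:ℝ)^c.re) * ((2*(2:ℝ)^c.re) * (1 - 2*(2:ℝ)^c.re)⁻¹ / 2 + 1) := by gcongr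
    _ = (2 * (2:ℝ)^c.re * (1 - 2*(2:ℝ)^c.re)⁻¹ + 2) * (p : ℝ) ^ c.re := by ring


lemma nhds_top_le_ENat : (𝓝 (⊤:ℕ∞)) ≤ Filter.map ((↑) : ℕ → ℕ∞) atTop ⊔ pure ⊤ := by
  intro U hU
  rw [Filter.mem_sup, Filter.mem_map, Filter.mem_pure] at hU
  obtain ⟨h1, h2⟩ := hU
  rw [Filter.mem_atTop_sets] at h1
  obtain ⟨N, hN⟩ := h1
  have hsub : Set.Ioi ((N : ℕ∞)) ⊆ U := by
    intro k hk
    induction k using ENat.recTopCoe with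
    | top => exact h2
    | coe m =>
      have : N ≤ m := by
        have := Set.mem_Ioi.mp hk
        exact_mod_cast this.le
      exact hN m this
  exact Filter.mem_of_superset (Ioi_mem_nhds (WithTop.coe_lt_top N)) hsub

lemma enat_continuousAt_top {X : Type*} [TopologicalSpace X] {f : ℕ∞ → X}
    (hf : Tendsto (fun n : ℕ => f n) atTop (𝓝 (f ⊤))) : ContinuousAt f ⊤ := by
  unfold ContinuousAt
  refine Filter.Tendsto.mono_left ?_ nhds_top_le_ENat
  rw [Filter.tendsto_sup]
  constructor
  · rwa [Filter.tendsto_map'_iff]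
  · exact tendsto_pure_left.mpr fun U hU => mem_of_mem_nhds hU

lemma continuous_fC (hc : c.re < -1) {p : ℕ} (hp : 2 ≤ p) : Continuous (fC c p) := by
  rw [continuous_iff_continuousAt]
  intro k
  induction k using ENat.recTopCoe with
  | top =>
    apply enat_continuousAt_top
    have hx : ‖(p:ℂ)^c‖ < 1 := by
      have := norm_x_le_r hc (c := c) hp
      have := r_lt_half hc
      linarith
    have hgeo : Tendsto (fun n : ℕ => ∑ j ∈ Finset.range n, ((p:ℂ)^c) ^ j) atTop
        (𝓝 ((1 - (p:ℂ)^c)⁻¹)) :=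
      (hasSum_geometric_of_norm_lt_one hx).tendsto_sum_nat
    have := hgeo.comp (tendsto_add_atTop_nat 1)
    rw [fC_top]
    refine Filter.Tendsto.congr (fun n => ?_) this
    rw [Function.comp_apply, fC_coe]
  | coe n =>
    unfold ContinuousAt
    rw [ENat.nhds_eq_pure (by simp)]
    exact tendsto_pure_nhds _ _


lemma two_le_prime (p : Nat.Primes) : 2 ≤ (p : ℕ) := p.prop.two_le

lemma summable_bound (hc : c.re < -1) (K : ℝ) :
    Summable (fun p : Nat.Primes => K * ((p : ℕ) : ℝ) ^ c.re) := by
  have h : Summable (fun n : ℕ => (n : ℝ) ^ c.re) := Real.summable_nat_rpow.mpr hc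
  exact (h.subtype {p : ℕ | p.Prime}).mul_left K

lemma summable_log_fC (hc : c.re < -1) (α : Nat.Primes → ℕ∞) :
    Summable fun p : Nat.Primes => Complex.log (fC c (p : ℕ) (α p)) := by
  refine Summable.of_norm_bounded
    (summable_bound hc (2 * (2:ℝ)^c.re * (1 - 2*(2:ℝ)^c.re)⁻¹ + 2)) ?_
  exact fun p => norm_log_fC_le hc (two_le_prime p) (α p)

lemma steinitz_eq_exp (hc : c.re < -1) :
    steinitzValC c = fun α : Nat.Primes → ℕ∞ =>
      Complex.exp (∑' p : Nat.Primes, Complex.log (fC c (p : ℕ) (α p))) := by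
  funext α
  rw [steinitzValC, Complex.cexp_tsum_eq_tprod (fun p => fC_ne_zero hc (two_le_prime p) (α p))
    (summable_log_fC hc α)]

lemma continuous_log_fC_coord (hc : c.re < -1) (p : Nat.Primes) :
    Continuous fun α : Nat.Primes → ℕ∞ => Complex.log (fC c (p : ℕ) (α p)) := by
  rw [continuous_iff_continuousAt]
  intro α
  have h1 : ContinuousAt (fun α : Nat.Primes → ℕ∞ => fC c (p : ℕ) (α p)) α :=
    ((continuous_fC hc (two_le_prime p)).comp (continuous_apply p)).continuousAt
  exact h1.clog (mem_slitPlane_iff.mpr (Or.inl (fC_re_pos hc (two_le_prime p) (α p))))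

lemma continuous_steinitz (hc : c.re < -1) : Continuous (steinitzValC c) := by
  rw [steinitz_eq_exp hc]
  refine Complex.continuous_exp.comp ?_
  refine continuous_tsum (continuous_log_fC_coord hc)
    (summable_bound hc (2 * (2:ℝ)^c.re * (1 - 2*(2:ℝ)^c.re)⁻¹ + 2)) ?_
  exact fun p α => norm_log_fC_le hc (two_le_prime p) (α p)


open ArithmeticFunction in
noncomputable def powC (c : ℂ) : ArithmeticFunction ℂ :=
  ⟨fun n => if n = 0 then 0 else (n : ℂ) ^ c, by simp⟩

lemma powC_apply {n : ℕ} (hn : n ≠ 0) : powC c n = (n : ℂ) ^ c := by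
  simp [powC, hn, ArithmeticFunction.coe_mk]

lemma isMult_powC (c : ℂ) : (powC c).IsMultiplicative := by
  constructor
  · rw [powC_apply one_ne_zero]
    simp
  · intro m n hmn
    rcases eq_or_ne m 0 with rfl | hm
    · have : n = 1 := by simpa using hmn
      subst this
      simp [powC, ArithmeticFunction.coe_mk]
    rcases eq_or_ne n 0 with rfl | hn
    · have : m = 1 := by simpa [Nat.coprime_zero_right] using hmn
      subst this
      simp [powC, ArithmeticFunction.coe_mk]
    rw [powC_apply (Nat.mul_ne_zero hm hn), powC_apply hm, powC_apply hn]
    have h := Complex.mul_cpow_ofReal_nonneg (Nat.cast_nonneg m) (Nat.cast_nonneg n) c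
    push_cast at h ⊢
    exact h

lemma sigmaC_eq_zeta_mul {n : ℕ} (hn : n ≠ 0) :
    sigmaC c n = (↑(ArithmeticFunction.zeta : ArithmeticFunction ℕ) * powC c) n := by
  rw [ArithmeticFunction.coe_zeta_mul_apply, sigmaC]
  refine Finset.sum_congr rfl fun d hd => ?_
  rw [powC_apply (Nat.pos_of_mem_divisors hd).ne']

lemma isMult_sigmaC (c : ℂ) :
    (↑(ArithmeticFunction.zeta : ArithmeticFunction ℕ) * powC c).IsMultiplicative :=
  ArithmeticFunction.isMultiplicative_zeta.natCast.mul (isMult_powC c)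

lemma sigmaC_mul_coprime {m n : ℕ} (hm : m ≠ 0) (hn : n ≠ 0) (h : Nat.Coprime m n) :
    sigmaC c (m * n) = sigmaC c m * sigmaC c n := by
  rw [sigmaC_eq_zeta_mul (Nat.mul_ne_zero hm hn), sigmaC_eq_zeta_mul hm, sigmaC_eq_zeta_mul hn]
  exact (isMult_sigmaC c).map_mul_of_coprime h

lemma sigmaC_one : sigmaC c 1 = 1 := by
  rw [sigmaC]
  simp

lemma sigmaC_prime_pow {p : ℕ} (hp : p.Prime) (k : ℕ) :
    sigmaC c (p ^ k) = fC c p (k : ℕ∞) := by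
  rw [sigmaC, Nat.sum_divisors_prime_pow hp, fC_coe]
  refine Finset.sum_congr rfl fun j _ => ?_
  push_cast
  rw [← Complex.natCast_cpow_natCast_mul, Complex.cpow_nat_mul]

lemma sigmaC_prod (F : Finset Nat.Primes) (e : Nat.Primes → ℕ) :
    sigmaC c (∏ p ∈ F, (p : ℕ) ^ e p) = ∏ p ∈ F, fC c (p : ℕ) ((e p : ℕ∞)) := by
  classical
  induction F using Finset.induction_on with
  | empty => simpa using sigmaC_one
  | @insert q F hq ih =>
    rw [Finset.prod_insert hq, Finset.prod_insert hq]
    have hcop : Nat.Coprime ((q : ℕ) ^ e q) (∏ p ∈ F, (p : ℕ) ^ e p) := by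
      refine Nat.Coprime.prod_right fun p hp => Nat.Coprime.pow _ _ ?_
      refine (Nat.coprime_primes q.prop p.prop).mpr ?_
      exact fun h => hq (by rwa [show q = p from Subtype.ext h])
    rw [sigmaC_mul_coprime (pow_ne_zero _ q.prop.pos.ne') ?_ hcop, sigmaC_prime_pow q.prop, ih]
    exact Finset.prod_ne_zero_iff.mpr fun p _ => pow_ne_zero _ p.prop.pos.ne'

lemma steinitz_eq_prod (c : ℂ) (F : Finset Nat.Primes) (e : Nat.Primes → ℕ)
    (he : ∀ p ∉ F, e p = 0) :
    steinitzValC c (fun p => (e p : ℕ∞)) = ∏ p ∈ F, fC c (p : ℕ) ((e p : ℕ∞)) := by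
  rw [steinitzValC]
  refine tprod_eq_prod fun p hp => ?_
  rw [he p hp]
  exact_mod_cast fC_zero c (p : ℕ)

lemma steinitz_finite_eq_sigmaC (c : ℂ) (F : Finset Nat.Primes) (e : Nat.Primes → ℕ)
    (he : ∀ p ∉ F, e p = 0) :
    steinitzValC c (fun p => (e p : ℕ∞)) = sigmaC c (∏ p ∈ F, (p : ℕ) ^ e p) := by
  rw [steinitz_eq_prod c F e he, sigmaC_prod]


lemma sigma_mem_range (hc : c.re < -1) (n : ℕ+) :
    sigmaC c (n : ℕ) ∈ Set.range (steinitzValC c) := by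
  classical
  set N : ℕ := (n : ℕ) with hNdef
  have hN : N ≠ 0 := n.pos.ne'
  set e : Nat.Primes → ℕ := fun p => N.factorization (p : ℕ) with he_def
  set F : Finset Nat.Primes := N.primeFactors.subtype Nat.Prime with hF
  refine ⟨fun p => (e p : ℕ∞), ?_⟩
  rw [steinitz_finite_eq_sigmaC c F e ?he]
  case he =>
    intro p hp
    replace hp : (p : ℕ) ∉ N.primeFactors := fun h => hp (Finset.mem_subtype.mpr h)
    exact Finsupp.notMem_support_iff.mp (by rwa [Nat.support_factorization])
  congr 1
  have h1 : ∏ p ∈ F, (p : ℕ) ^ e p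
      = ∏ q ∈ N.primeFactors.filter Nat.Prime, q ^ N.factorization q :=
    Finset.prod_subtype_eq_prod_filter (fun q : ℕ => q ^ N.factorization q)
  rw [h1, Finset.filter_true_of_mem fun p hp => (Nat.mem_primeFactors.mp hp).1]
  rw [← Nat.prod_factorization_eq_prod_primeFactors fun p k => p ^ k]
  exact Nat.factorization_prod_pow_eq_self hN

lemma tendsto_coe_enat_top : Filter.Tendsto (fun m : ℕ => (m : ℕ∞)) atTop (𝓝 ⊤) := by
  rw [ENat.tendsto_nhds_top_iff_natCast_lt]
  intro n
  filter_upwards [Filter.eventually_gt_atTop n] with m hm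
  exact_mod_cast hm

theorem main_statement (c : ℂ) (hc : c.re < -1) :
    closure (Set.range fun n : ℕ+ => sigmaC c (n : ℕ)) =
      Set.range (steinitzValC c) := by
  classical
  apply Set.Subset.antisymm
  · refine closure_minimal ?_ (isCompact_range (continuous_steinitz hc)).isClosed
    rintro x ⟨n, rfl⟩
    exact sigma_mem_range hc n
  · rintro x ⟨α, rfl⟩
    -- truncated exponents
    set e : ℕ → Nat.Primes → ℕ :=
      fun m p => if (p : ℕ) ≤ m then (min (α p) (m : ℕ∞)).toNat else 0 with he_def
    have hαm : Filter.Tendsto (fun m : ℕ => (fun p => ((e m p : ℕ∞)) : Nat.Primes → ℕ∞))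
        atTop (𝓝 α) := by
      rw [tendsto_pi_nhds]
      intro p
      by_cases htop : α p = ⊤
      · rw [htop]
        refine Filter.Tendsto.congr' ?_ tendsto_coe_enat_top
        filter_upwards [Filter.eventually_ge_atTop (p : ℕ)] with m hm
        simp only [he_def, hm, if_true, htop]
        simp
      · obtain ⟨k, hk⟩ := ENat.ne_top_iff_exists.mp htop
        rw [← hk]
        refine Filter.Tendsto.congr' ?_ (tendsto_const_nhds (x := ((k : ℕ∞))))
        filter_upwards [Filter.eventually_ge_atTop (p : ℕ), Filter.eventually_ge_atTop k]
          with m hm hmk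
        simp only [he_def, hm, if_true, ← hk]
        rw [min_eq_left (by exact Nat.cast_le.mpr hmk)]
        exact congrArg _ (ENat.toNat_coe k).symm
    have hyval : ∀ m : ℕ, ∃ n : ℕ+,
        steinitzValC c (fun p => ((e m p : ℕ∞))) = sigmaC c (n : ℕ) := by
      intro m
      set F : Finset Nat.Primes := (Finset.range (m + 1)).subtype Nat.Prime with hF
      have he0 : ∀ p ∉ F, e m p = 0 := by
        intro p hp
        replace hp : ¬ (p : ℕ) < m + 1 := fun h => hp (Finset.mem_subtype.mpr (Finset.mem_range.mpr h))
        rw [he_def]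
        simp only [ite_eq_right_iff]
        intro h
        omega
      have hpos : 0 < ∏ p ∈ F, (p : ℕ) ^ e m p :=
        Finset.prod_pos fun p _ => pow_pos p.prop.pos _
      exact ⟨⟨_, hpos⟩, steinitz_finite_eq_sigmaC c F (e m) he0⟩
    have htend : Filter.Tendsto (fun m : ℕ => steinitzValC c (fun p => ((e m p : ℕ∞))))
        atTop (𝓝 (steinitzValC c α)) :=
      ((continuous_steinitz hc).continuousAt).tendsto.comp hαm
    refine mem_closure_of_tendsto htend ?_
    filter_upwards with m
    obtain ⟨n, hn⟩ := hyval m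
    exact ⟨n, hn.symm⟩

end SP

/-- The closure of `{σ_c(n) : n ∈ ℕ+}` equals `{Σ_c(α) : α : Primes → ℕ ∪ {∞}}`
    when `Re(c) < -1`. -/


theorem statement0 (c : ℂ) (hc : c.re < -1) :
    closure (Set.range fun n : ℕ+ => sigmaC c (n : ℕ)) =
      Set.range (steinitzValC c) := by
  exact SP.main_statement c hc
end

section
/- Let r ≥ 2 be a real number, let q be an r-mighty prime, and let p be a prime with p > q². Suppose α is a function from the set of primes to ℕ ∪ {∞} (encoding a Steinitz number) such that σ_{-r}(q) < Σ_{-r}(α) < σ_{-r}(q·p). Then α(q) ≥ 1 and α(q') = 0 for every prime q' < q; that is, q divides the Steinitz number encoded by α and q is its smallest prime factor. -/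
open scoped BigOperators
set_option maxHeartbeats 1000000

/-- The divisor function `σ_{-r}(n) = ∑_{d ∣ n} d^{-r}`. -/
noncomputable def sigmaNeg (r : ℝ) (n : ℕ) : ℝ := ∑ d ∈ n.divisors, (d : ℝ) ^ (-r)

/-- `u_p(r) = ∏_{q prime, q > p} (1 - q^{-r})⁻¹`. -/
noncomputable def uAfter (r : ℝ) (p : ℕ) : ℝ :=
  ∏' q : {q : Nat.Primes // p < (q : ℕ)}, (1 - ((q.1 : ℕ) : ℝ) ^ (-r))⁻¹

/-- A prime `p` is `r`-mighty if `1 + p^{-r} > ∏_{q prime, q > p} (1 - q^{-r})⁻¹`. -/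
def Mighty (r : ℝ) (p : ℕ) : Prop := uAfter r p < 1 + (p : ℝ) ^ (-r)

/-- `f_p(k) = σ_{-r}(p^k)` for finite `k`, and `f_p(∞) = (1 - p^{-r})⁻¹`. -/
noncomputable def fReal (r : ℝ) (p : ℕ) (k : ℕ∞) : ℝ :=
  if k = ⊤ then (1 - (p : ℝ) ^ (-r))⁻¹
  else ∑ j ∈ Finset.range (k.toNat + 1), ((p : ℝ) ^ (-r)) ^ j

/-- The value of `σ_{-r}` on the Steinitz number encoded by `α`. -/
noncomputable def steinitzVal (r : ℝ) (α : Nat.Primes → ℕ∞) : ℝ :=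
  ∏' p : Nat.Primes, fReal r (p : ℕ) (α p)

/-- The topological closure of the image `σ_{-r}(ℕ)` in `ℝ`. -/
noncomputable def sigmaClosure (r : ℝ) : Set ℝ :=
  closure (Set.range fun n : ℕ+ => sigmaNeg r (n : ℕ))

/-! ### Auxiliary lemmas -/

section Aux

open scoped Classical

-- bounds on `p^{-r}`
lemma SN.xb (r : ℝ) (hr : 2 ≤ r) (p : ℕ) (hp : 2 ≤ p) :
    0 < (p : ℝ) ^ (-r) ∧ (p : ℝ) ^ (-r) ≤ 1/4 := by
  have hp1 : (1:ℝ) ≤ p := by exact_mod_cast (by omega : 1 ≤ p)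
  have hp0 : (0:ℝ) < p := by linarith
  constructor
  · exact Real.rpow_pos_of_pos hp0 _
  · have h1 : (p : ℝ) ^ (-r) ≤ (p : ℝ) ^ (-(2:ℝ)) :=
      Real.rpow_le_rpow_of_exponent_le hp1 (by linarith)
    have h2 : (p : ℝ) ^ (-(2:ℝ)) ≤ (2 : ℝ) ^ (-(2:ℝ)) := by
      rw [Real.rpow_neg hp0.le, Real.rpow_neg (by norm_num)]
      have : (2:ℝ) ^ (2:ℝ) ≤ (p:ℝ) ^ (2:ℝ) :=
        Real.rpow_le_rpow (by norm_num) (by exact_mod_cast hp) (by norm_num)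
      exact inv_anti₀ (Real.rpow_pos_of_pos (by norm_num) _) this
    have h3 : (2:ℝ) ^ (-(2:ℝ)) = 1/4 := by
      rw [Real.rpow_neg (by norm_num), show ((2:ℝ) ^ (2:ℝ)) = (2:ℝ)^(2:ℕ) by
        rw [← Real.rpow_natCast (2:ℝ) 2]; norm_num]
      norm_num
    exact h1.trans (h2.trans_eq h3)

-- fReal lemmas
lemma SN.fReal_zero (r : ℝ) (p : ℕ) : fReal r p 0 = 1 := by
  simp [fReal]

lemma SN.one_le_fReal {r : ℝ} {p : ℕ} (hx0 : 0 ≤ (p:ℝ)^(-r)) (hx1 : (p:ℝ)^(-r) < 1)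
    (k : ℕ∞) : 1 ≤ fReal r p k := by
  set x := (p:ℝ)^(-r)
  rcases eq_or_ne k ⊤ with rfl | hk
  · rw [fReal, if_pos rfl, ← one_div, le_div_iff₀ (by linarith)]
    linarith
  · rw [fReal, if_neg hk]
    have h0 : (0:ℕ) ∈ Finset.range (k.toNat + 1) := by simp
    calc (1:ℝ) = x ^ 0 := by simp
    _ ≤ _ := Finset.single_le_sum (fun j _ => pow_nonneg hx0 j) h0

lemma SN.fReal_le_inv {r : ℝ} {p : ℕ} (hx0 : 0 ≤ (p:ℝ)^(-r)) (hx1 : (p:ℝ)^(-r) < 1)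
    (k : ℕ∞) : fReal r p k ≤ (1 - (p:ℝ)^(-r))⁻¹ := by
  set x := (p:ℝ)^(-r) with hxdef
  rcases eq_or_ne k ⊤ with rfl | hk
  · rw [fReal, if_pos rfl]
  · rw [fReal, if_neg hk, ← one_div, le_div_iff₀ (by linarith)]
    have hg := geom_sum_mul x (k.toNat + 1)
    have hxp : 0 ≤ x ^ (k.toNat + 1) := pow_nonneg hx0 _
    nlinarith [hg]

lemma SN.one_add_le_fReal {r : ℝ} {p : ℕ} (hx0 : 0 ≤ (p:ℝ)^(-r)) (hx1 : (p:ℝ)^(-r) < 1)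
    {k : ℕ∞} (hk : 1 ≤ k) : 1 + (p:ℝ)^(-r) ≤ fReal r p k := by
  set x := (p:ℝ)^(-r)
  rcases eq_or_ne k ⊤ with rfl | hkt
  · rw [fReal, if_pos rfl, ← one_div, le_div_iff₀ (by linarith)]
    nlinarith
  · rw [fReal, if_neg hkt]
    have h1 : 1 ≤ k.toNat := by
      rcases k with _ | n
      · exact absurd rfl hkt
      · have : (1:ℕ∞) ≤ (n:ℕ∞) := hk
        exact_mod_cast this
    have hsub : Finset.range 2 ⊆ Finset.range (k.toNat + 1) := by
      apply Finset.range_subset_range.mpr; omega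
    calc 1 + x = ∑ j ∈ Finset.range 2, x ^ j := by
          rw [Finset.sum_range_succ, Finset.sum_range_one]; simp
    _ ≤ _ := Finset.sum_le_sum_of_subset_of_nonneg hsub
        (fun j _ _ => pow_nonneg hx0 j)

-- the completely multiplicative function supported on numbers with all prime factors > q
noncomputable def SN.fq (r : ℝ) (q : ℕ) (hq : q.Prime) : ℕ →*₀ ℝ where
  toFun n := if ∀ p' : ℕ, p'.Prime → p' ∣ n → q < p' then (n:ℝ)^(-r) else 0
  map_zero' := by
    rw [if_neg]
    push_neg
    exact ⟨q, hq, dvd_zero q, le_rfl⟩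
  map_one' := by
    rw [if_pos]
    · simp
    · intro p' hp' hd
      exact absurd (Nat.dvd_one.mp hd ▸ hp') Nat.not_prime_one
  map_mul' m n := by
    by_cases hm : ∀ p' : ℕ, p'.Prime → p' ∣ m → q < p'
    · by_cases hn : ∀ p' : ℕ, p'.Prime → p' ∣ n → q < p'
      · rw [if_pos hm, if_pos hn, if_pos, Nat.cast_mul,
          Real.mul_rpow (Nat.cast_nonneg m) (Nat.cast_nonneg n)]
        intro p' hp' hd
        rcases (Nat.Prime.dvd_mul hp').mp hd with h | h
        · exact hm p' hp' h
        · exact hn p' hp' h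
      · rw [if_neg hn, mul_zero, if_neg]
        push_neg at hn ⊢
        obtain ⟨p', hp', hd, hle⟩ := hn
        exact ⟨p', hp', hd.mul_left m, hle⟩
    · rw [if_neg hm, zero_mul, if_neg]
      push_neg at hm ⊢
      obtain ⟨p', hp', hd, hle⟩ := hm
      exact ⟨p', hp', hd.mul_right n, hle⟩

lemma SN.fq_prime_gt (r : ℝ) (q : ℕ) (hq : q.Prime) {p : ℕ} (hp : p.Prime) (h : q < p) :
    SN.fq r q hq p = (p:ℝ)^(-r) := by
  show (if _ then _ else _) = _
  rw [if_pos]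
  intro p' hp' hd
  rwa [(Nat.prime_dvd_prime_iff_eq hp' hp).mp hd]

lemma SN.fq_prime_le (r : ℝ) (q : ℕ) (hq : q.Prime) {p : ℕ} (hp : p.Prime) (h : ¬ q < p) :
    SN.fq r q hq p = 0 := by
  show (if _ then _ else _) = _
  rw [if_neg]
  push_neg
  exact ⟨p, hp, dvd_rfl, not_lt.mp h⟩

lemma SN.fq_nonneg (r : ℝ) (q : ℕ) (hq : q.Prime) (n : ℕ) : 0 ≤ SN.fq r q hq n := by
  show 0 ≤ if ∀ p' : ℕ, p'.Prime → p' ∣ n → q < p' then (n:ℝ)^(-r) else 0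
  by_cases h : ∀ p' : ℕ, p'.Prime → p' ∣ n → q < p'
  · rw [if_pos h]; exact Real.rpow_nonneg (Nat.cast_nonneg n) _
  · rw [if_neg h]

lemma SN.fq_le (r : ℝ) (q : ℕ) (hq : q.Prime) (n : ℕ) : SN.fq r q hq n ≤ (n:ℝ)^(-r) := by
  show (if ∀ p' : ℕ, p'.Prime → p' ∣ n → q < p' then (n:ℝ)^(-r) else 0) ≤ _
  by_cases h : ∀ p' : ℕ, p'.Prime → p' ∣ n → q < p'
  · rw [if_pos h]
  · rw [if_neg h]; exact Real.rpow_nonneg (Nat.cast_nonneg n) _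

lemma SN.fq_summable (r : ℝ) (hr : 2 ≤ r) (q : ℕ) (hq : q.Prime) :
    Summable (fun n => ‖SN.fq r q hq n‖) := by
  refine Summable.of_nonneg_of_le (fun n => norm_nonneg _) (fun n => ?_)
    (Real.summable_nat_rpow.mpr (by linarith : -r < -1))
  rw [Real.norm_eq_abs, abs_of_nonneg (SN.fq_nonneg r q hq n)]
  exact SN.fq_le r q hq n

lemma SN.euler_fq (r : ℝ) (hr : 2 ≤ r) (q : ℕ) (hq : q.Prime) :
    HasProd (fun p : Nat.Primes => (1 - SN.fq r q hq p)⁻¹) (∑' n, SN.fq r q hq n) :=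
  EulerProduct.eulerProduct_completely_multiplicative_hasProd (SN.fq_summable r hr q hq)

-- sigmaNeg computations
lemma SN.sigmaNeg_prime (r : ℝ) {q : ℕ} (hq : q.Prime) :
    sigmaNeg r q = 1 + (q : ℝ) ^ (-r) := by
  rw [sigmaNeg, Nat.Prime.divisors hq, Finset.sum_pair hq.one_lt.ne]
  norm_num

lemma SN.divisors_pq {q p : ℕ} (hq : q.Prime) (hp : p.Prime) (hne : q ≠ p) :
    (q * p).divisors = {1, q, p, q * p} := by
  ext d
  simp only [Nat.mem_divisors, Finset.mem_insert, Finset.mem_singleton]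
  constructor
  · rintro ⟨hd, -⟩
    by_cases hqd : q ∣ d
    · obtain ⟨e, rfl⟩ := hqd
      have he : e ∣ p := (mul_dvd_mul_iff_left hq.pos.ne').mp hd
      rcases (Nat.Prime.eq_one_or_self_of_dvd hp e he) with rfl | rfl
      · right; left; rw [mul_one]
      · right; right; right; rfl
    · have hco : Nat.Coprime d q := Nat.Coprime.symm ((hq.coprime_iff_not_dvd).mpr hqd)
      have : d ∣ p := hco.dvd_of_dvd_mul_left hd
      rcases (Nat.Prime.eq_one_or_self_of_dvd hp d this) with rfl | rfl
      · left; rfl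
      · right; right; left; rfl
  · have hqp0 : q * p ≠ 0 := Nat.mul_ne_zero hq.pos.ne' hp.pos.ne'
    rintro (rfl | rfl | rfl | rfl)
    · exact ⟨one_dvd _, hqp0⟩
    · exact ⟨Dvd.intro p rfl, hqp0⟩
    · exact ⟨Dvd.intro_left q rfl, hqp0⟩
    · exact ⟨dvd_rfl, hqp0⟩

lemma SN.sigmaNeg_pq (r : ℝ) {q p : ℕ} (hq : q.Prime) (hp : p.Prime) (hne : q ≠ p) :
    sigmaNeg r (q * p) = (1 + (q : ℝ) ^ (-r)) * (1 + (p : ℝ) ^ (-r)) := by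
  have h1q : (1:ℕ) ≠ q := hq.one_lt.ne
  have h1p : (1:ℕ) ≠ p := hp.one_lt.ne
  have hqqp : q ≠ q * p := by
    have := hp.one_lt
    nlinarith [hq.pos]
  have hpqp : p ≠ q * p := by
    have := hq.one_lt
    nlinarith [hp.pos]
  have h1qp : (1:ℕ) ≠ q * p := by
    have := hq.one_lt; have := hp.one_lt
    nlinarith
  rw [sigmaNeg, SN.divisors_pq hq hp hne]
  rw [Finset.sum_insert (by simp [h1q, h1p, h1qp]),
    Finset.sum_insert (by simp [hne, hqqp]),
    Finset.sum_pair hpqp]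
  have : ((q * p : ℕ) : ℝ) ^ (-r) = (q:ℝ)^(-r) * (p:ℝ)^(-r) := by
    push_cast
    rw [Real.mul_rpow (Nat.cast_nonneg q) (Nat.cast_nonneg p)]
  rw [this]
  push_cast
  rw [Real.one_rpow]
  ring

-- the key arithmetic inequality
lemma SN.big_ineq (r : ℝ) (hr : 2 ≤ r) {q q' p : ℕ} (hq : q.Prime) (hq' : q'.Prime)
    (hp : p.Prime) (hq'q : q' < q) (hpq : q ^ 2 < p) :
    (1 + (q:ℝ)^(-r)) * (1 + (p:ℝ)^(-r)) ≤ 1 + (q':ℝ)^(-r) := by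
  have hQ : (2:ℝ) ≤ q := by exact_mod_cast hq.two_le
  have hQ' : (2:ℝ) ≤ q' := by exact_mod_cast hq'.two_le
  have hQ'0 : (0:ℝ) < q' := by linarith
  have hQ0 : (0:ℝ) < q := by linarith
  have hP0 : (0:ℝ) < p := by exact_mod_cast hp.pos
  have hq'' : (q':ℝ) + 1 ≤ q := by exact_mod_cast (by omega : q' + 1 ≤ q)
  have hPQ : ((q:ℝ))^(2:ℕ) ≤ (p:ℝ) := by exact_mod_cast hpq.le
  set t := (q:ℝ)^(-r) with hT
  set s := (q':ℝ)^(-r) with hS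
  set u := (p:ℝ)^(-r) with hU
  have htpos : 0 < t := Real.rpow_pos_of_pos hQ0 _
  have hupos : 0 < u := Real.rpow_pos_of_pos hP0 _
  have hspos : 0 < s := Real.rpow_pos_of_pos hQ'0 _
  have hb : t * (q:ℝ)^(2:ℕ) ≤ 1 := by
    have h1 : t ≤ (q:ℝ)^(-(2:ℝ)) :=
      Real.rpow_le_rpow_of_exponent_le (by linarith) (by linarith)
    have h2 : (q:ℝ)^(-(2:ℝ)) = ((q:ℝ)^(2:ℕ))⁻¹ := by
      rw [Real.rpow_neg hQ0.le, ← Real.rpow_natCast (q:ℝ) 2]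
      norm_num
    rw [← le_div_iff₀ (by positivity)]
    rw [h2] at h1
    rwa [one_div]
  have hc : u ≤ t^(2:ℕ) := by
    have key : ((q:ℝ)^(2:ℕ))^(-r) = t^(2:ℕ) := by
      rw [hT, ← Real.rpow_natCast ((q:ℝ)^(-r)) 2, ← Real.rpow_natCast (q:ℝ) 2,
        ← Real.rpow_mul hQ0.le, ← Real.rpow_mul hQ0.le]
      ring_nf
    have h1 : (p:ℝ)^(-r) ≤ ((q:ℝ)^(2:ℕ))^(-r) := by
      rw [Real.rpow_neg hP0.le, Real.rpow_neg (by positivity)]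
      exact inv_anti₀ (Real.rpow_pos_of_pos (by positivity) _)
        (Real.rpow_le_rpow (by positivity) hPQ (by linarith))
    exact h1.trans_eq key
  have hd : t * (1 + 2/(q:ℝ)) ≤ s := by
    have hm1 : (-1:ℝ) ≤ 1/(q':ℝ) := le_trans (by norm_num) (by positivity : (0:ℝ) ≤ 1/(q':ℝ))
    have hBern : 1 + r * (1/(q':ℝ)) ≤ (1 + 1/(q':ℝ))^r :=
      one_add_mul_self_le_rpow_one_add hm1 (by linarith)
    have hqq' : (q':ℝ) * (1 + 1/(q':ℝ)) = (q':ℝ) + 1 := by field_simp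
    have h1 : (q':ℝ)^r * (1 + r * (1/(q':ℝ))) ≤ ((q':ℝ)+1)^r := by
      calc (q':ℝ)^r * (1 + r * (1/(q':ℝ)))
          ≤ (q':ℝ)^r * (1 + 1/(q':ℝ))^r :=
            mul_le_mul_of_nonneg_left hBern (Real.rpow_nonneg hQ'0.le r)
        _ = ((q':ℝ) * (1 + 1/(q':ℝ)))^r := (Real.mul_rpow hQ'0.le (by positivity)).symm
        _ = ((q':ℝ)+1)^r := by rw [hqq']
    have h2 : ((q':ℝ)+1)^r ≤ (q:ℝ)^r := Real.rpow_le_rpow (by positivity) hq'' (by linarith)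
    have h3 : 2/(q:ℝ) ≤ r * (1/(q':ℝ)) := by
      rw [div_le_iff₀ hQ0]
      have hexp : r * (1/(q':ℝ)) * (q:ℝ) = r * (q:ℝ) / (q':ℝ) := by ring
      rw [hexp, le_div_iff₀ hQ'0]
      nlinarith
    have h4 : (q':ℝ)^r * (1 + 2/(q:ℝ)) ≤ (q:ℝ)^r := by
      calc (q':ℝ)^r * (1 + 2/(q:ℝ)) ≤ (q':ℝ)^r * (1 + r * (1/(q':ℝ))) :=
            mul_le_mul_of_nonneg_left (by linarith) (Real.rpow_nonneg hQ'0.le r)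
        _ ≤ ((q':ℝ)+1)^r := h1
        _ ≤ (q:ℝ)^r := h2
    have hqr : 0 < (q:ℝ)^r := Real.rpow_pos_of_pos hQ0 _
    have hq'r : 0 < (q':ℝ)^r := Real.rpow_pos_of_pos hQ'0 _
    have goal' : (1 + 2/(q:ℝ)) / (q:ℝ)^r ≤ 1 / (q':ℝ)^r := by
      rw [div_le_div_iff₀ hqr hq'r]
      nlinarith [h4]
    calc t * (1 + 2/(q:ℝ)) = (1 + 2/(q:ℝ)) / (q:ℝ)^r := by
          rw [hT, Real.rpow_neg hQ0.le]; ring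
      _ ≤ 1/(q':ℝ)^r := goal'
      _ = s := by rw [hS, Real.rpow_neg hQ'0.le, one_div]
  have htq : t * (q:ℝ) ≤ 1/2 := by nlinarith [mul_pos htpos hQ0]
  have ht4 : 4 * t ≤ 1 := by nlinarith
  have e5 : u * (q:ℝ) ≤ t/2 := by
    have := mul_le_mul_of_nonneg_right hc hQ0.le
    nlinarith [htq, htpos.le]
  have e6 : t * u * (q:ℝ) ≤ t * (t/2) := by
    calc t * u * (q:ℝ) = t * (u * (q:ℝ)) := by ring
      _ ≤ t * (t/2) := mul_le_mul_of_nonneg_left e5 htpos.le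
  have key2 : (u + t*u) * (q:ℝ) ≤ 2*t := by nlinarith [e5, e6, ht4, htpos.le]
  have key3 : u + t*u ≤ 2*t/(q:ℝ) := by rw [le_div_iff₀ hQ0]; exact key2
  have hd2 : t + 2*t/(q:ℝ) ≤ s := by
    calc t + 2*t/(q:ℝ) = t * (1 + 2/(q:ℝ)) := by field_simp
      _ ≤ s := hd
  nlinarith [key3, hd2, htpos.le, hupos.le]

end Aux

theorem statement1 (r : ℝ) (hr : 2 ≤ r) (q : ℕ) (hq : q.Prime) (hqm : Mighty r q)
    (p : ℕ) (hp : p.Prime) (hpq : q ^ 2 < p)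
    (α : Nat.Primes → ℕ∞)
    (h1 : sigmaNeg r q < steinitzVal r α)
    (h2 : steinitzVal r α < sigmaNeg r (q * p)) :
    1 ≤ α ⟨q, hq⟩ ∧ ∀ q' : Nat.Primes, (q' : ℕ) < q → α q' = 0 := by
  classical
  have hq2 : 2 ≤ q := hq.two_le
  have hqlp : q < p := by nlinarith [hq.two_le]
  have hxq := SN.xb r hr q hq2
  have hsq : sigmaNeg r q = 1 + (q:ℝ)^(-r) := SN.sigmaNeg_prime r hq
  have hsqp : sigmaNeg r (q * p) = (1 + (q:ℝ)^(-r)) * (1 + (p:ℝ)^(-r)) :=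
    SN.sigmaNeg_pq r hq hp hqlp.ne
  set F : Nat.Primes → ℝ := fun i => fReal r (i : ℕ) (α i) with hFdef
  have hxf : ∀ i : Nat.Primes, 0 < ((i:ℕ):ℝ)^(-r) ∧ ((i:ℕ):ℝ)^(-r) ≤ 1/4 :=
    fun i => SN.xb r hr (i:ℕ) i.2.two_le
  have hF1 : ∀ i : Nat.Primes, 1 ≤ F i := fun i =>
    SN.one_le_fReal (hxf i).1.le (by linarith [(hxf i).2]) (α i)
  -- multipliability
  by_cases hM : Multipliable F
  swap
  · exfalso
    have : steinitzVal r α = 1 := tprod_eq_one_of_not_multipliable hM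
    rw [this, hsq] at h1
    linarith [hxq.1]
  obtain ⟨A, hA⟩ := hM
  have hAval : steinitzVal r α = A := hA.tprod_eq
  -- every factor is at most the whole product
  have hle_A : ∀ i : Nat.Primes, F i ≤ A := by
    intro i
    refine ge_of_tendsto hA ?_
    filter_upwards [Filter.eventually_ge_atTop ({i} : Finset Nat.Primes)] with s hs
    have hi : i ∈ s := hs (Finset.mem_singleton_self i)
    rw [← Finset.mul_prod_erase s F hi]
    have h1' : (1:ℝ) ≤ ∏ j ∈ s.erase i, F j := by
      have := Finset.prod_le_prod (s := s.erase i) (f := fun _ => (1:ℝ)) (g := F)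
        (fun _ _ => zero_le_one) (fun j _ => hF1 j)
      simpa using this
    have := hF1 i
    nlinarith
  -- claim 2
  have claim2 : ∀ q' : Nat.Primes, (q' : ℕ) < q → α q' = 0 := by
    intro q' hq'
    by_contra hne
    have h1le : 1 ≤ α q' := ENat.one_le_iff_ne_zero.mpr hne
    have hxq' := hxf q'
    have hFq' : 1 + ((q':ℕ):ℝ)^(-r) ≤ F q' :=
      SN.one_add_le_fReal hxq'.1.le (by linarith [hxq'.2]) h1le
    have hbig : (1 + (q:ℝ)^(-r)) * (1 + (p:ℝ)^(-r)) ≤ 1 + ((q':ℕ):ℝ)^(-r) :=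
      SN.big_ineq r hr hq q'.2 hp hq' hpq
    have := hle_A q'
    rw [hAval, hsqp] at h2
    linarith
  refine ⟨?_, claim2⟩
  by_contra hq0
  push_neg at hq0
  have hq0' : α ⟨q, hq⟩ = 0 := by
    rcases eq_or_ne (α ⟨q, hq⟩) 0 with h | h
    · exact h
    · exact absurd (ENat.one_le_iff_ne_zero.mpr h) (not_le.mpr hq0)
  -- the dominating product
  set G : Nat.Primes → ℝ := fun i => (1 - SN.fq r q hq (i:ℕ))⁻¹ with hGdef
  set Z : ℝ := ∑' n, SN.fq r q hq n with hZdef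
  have hGP : HasProd G Z := SN.euler_fq r hr q hq
  have hG_gt : ∀ i : Nat.Primes, q < (i:ℕ) → G i = (1 - ((i:ℕ):ℝ)^(-r))⁻¹ := by
    intro i hi
    rw [hGdef]
    simp only []
    rw [SN.fq_prime_gt r q hq i.2 hi]
  have hG_le : ∀ i : Nat.Primes, ¬ q < (i:ℕ) → G i = 1 := by
    intro i hi
    rw [hGdef]
    simp only []
    rw [SN.fq_prime_le r q hq i.2 hi]
    norm_num
  -- uAfter r q = Z
  have hsub : HasProd
      (fun q' : {q' : Nat.Primes // q < (q' : ℕ)} => (1 - ((q'.1 : ℕ) : ℝ) ^ (-r))⁻¹) Z := by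
    have hinj : Function.Injective
        (Subtype.val : {q' : Nat.Primes // q < (q' : ℕ)} → Nat.Primes) :=
      Subtype.coe_injective
    have hone : ∀ x : Nat.Primes,
        x ∉ Set.range (Subtype.val : {q' : Nat.Primes // q < (q' : ℕ)} → Nat.Primes) →
        G x = 1 := by
      intro x hx
      apply hG_le
      intro hlt
      exact hx ⟨⟨x, hlt⟩, rfl⟩
    have := (hinj.hasProd_iff hone).mpr hGP
    refine this.congr_fun ?_
    intro x
    exact (hG_gt x.1 x.2).symm
  have hZval : uAfter r q = Z := hsub.tprod_eq
  -- F ≤ G pointwise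
  have hFG : ∀ i : Nat.Primes, F i ≤ G i := by
    intro i
    by_cases hiq : q < (i:ℕ)
    · rw [hG_gt i hiq]
      exact SN.fReal_le_inv (hxf i).1.le (by linarith [(hxf i).2]) (α i)
    · rw [hG_le i hiq]
      have hαi : α i = 0 := by
        rcases lt_or_eq_of_le (not_lt.mp hiq) with h | h
        · exact claim2 i h
        · have : i = ⟨q, hq⟩ := Subtype.ext h
          rw [this, hq0']
      have : F i = 1 := by
        rw [hFdef]
        simp only []
        rw [hαi, SN.fReal_zero]
      rw [this]
  have hAZ : A ≤ Z := by
    refine le_of_tendsto_of_tendsto' hA hGP (fun s => ?_)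
    exact Finset.prod_le_prod (fun i _ => le_trans zero_le_one (hF1 i)) (fun i _ => hFG i)
  have hZlt : Z < 1 + (q:ℝ)^(-r) := by
    rw [← hZval]
    exact hqm
  rw [hAval, hsq] at h1
  linarith
end

section
/- Let r > 1 be a real number and let p and q be r-mighty primes with p > q². If n is a positive integer such that σ_{-r}(q)·u_p(r) < σ_{-r}(n) < σ_{-r}(q·p), then q divides n. -/
open scoped BigOperators

/-! ### Auxiliary lemmas -/

open scoped NNReal

/-- The completely multiplicative function equal to `m ^ (-r)` on `q`-rough numbers
(positive integers all of whose prime factors exceed `q`) and `0` elsewhere. -/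
noncomputable def roughPow (r : ℝ) (q : ℕ) : ℕ →*₀ ℝ where
  toFun m := if m ≠ 0 ∧ ∀ ℓ ∈ m.primeFactors, q < ℓ then (m : ℝ) ^ (-r) else 0
  map_zero' := by simp
  map_one' := by simp
  map_mul' a b := by
    rcases eq_or_ne a 0 with rfl | ha
    · simp
    rcases eq_or_ne b 0 with rfl | hb
    · simp
    have hab : a * b ≠ 0 := mul_ne_zero ha hb
    simp only [ha, hb, hab, ne_eq, not_false_eq_true, true_and]
    rw [Nat.primeFactors_mul ha hb]
    by_cases Ha : ∀ ℓ ∈ a.primeFactors, q < ℓ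
    · by_cases Hb : ∀ ℓ ∈ b.primeFactors, q < ℓ
      · rw [if_pos, if_pos Ha, if_pos Hb]
        · push_cast
          exact Real.mul_rpow (Nat.cast_nonneg a) (Nat.cast_nonneg b)
        · exact Finset.forall_mem_union.mpr ⟨Ha, Hb⟩
      · rw [if_neg, if_neg Hb, mul_zero]
        exact fun H => Hb fun ℓ hℓ => H ℓ (Finset.mem_union_right _ hℓ)
    · rw [if_neg, if_neg Ha, zero_mul]
      exact fun H => Ha fun ℓ hℓ => H ℓ (Finset.mem_union_left _ hℓ)

lemma roughPow_apply (r : ℝ) (q m : ℕ) :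
    roughPow r q m = if m ≠ 0 ∧ ∀ ℓ ∈ m.primeFactors, q < ℓ then (m : ℝ) ^ (-r) else 0 := rfl

lemma roughPow_nonneg (r : ℝ) (q m : ℕ) : 0 ≤ roughPow r q m := by
  rw [roughPow_apply]
  split
  · positivity
  · exact le_rfl

lemma roughPow_summable_norm {r : ℝ} (hr : 1 < r) (q : ℕ) :
    Summable (fun m => ‖roughPow r q m‖) := by
  refine Summable.of_nonneg_of_le (fun _ => norm_nonneg _) (fun m => ?_)
    (Real.summable_nat_rpow_inv.mpr hr)
  rw [roughPow_apply]
  split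
  · rw [Real.norm_eq_abs, abs_of_nonneg (by positivity),
      Real.rpow_neg (Nat.cast_nonneg m)]
  · rw [norm_zero]
    positivity

lemma rpow_neg_le_rpow_neg {a b r : ℝ} (ha : 0 < a) (hab : a ≤ b) (hr : 0 < r) :
    b ^ (-r) ≤ a ^ (-r) := by
  rw [Real.rpow_neg ha.le, Real.rpow_neg (ha.trans_le hab).le]
  exact inv_anti₀ (Real.rpow_pos_of_pos ha r) (Real.rpow_le_rpow ha.le hab hr.le)

lemma rpow_neg_lt_rpow_neg {a b r : ℝ} (ha : 0 < a) (hab : a < b) (hr : 0 < r) :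
    b ^ (-r) < a ^ (-r) := by
  rw [Real.rpow_neg ha.le, Real.rpow_neg (ha.trans hab).le]
  exact inv_strictAnti₀ (Real.rpow_pos_of_pos ha r) (Real.rpow_lt_rpow ha.le hab hr)

/-- `uAfter` is the sum of `roughPow` over all naturals. -/
lemma uAfter_eq_tsum {r : ℝ} (hr : 1 < r) (q : ℕ) :
    uAfter r q = ∑' m, roughPow r q m := by
  have hsum := roughPow_summable_norm hr q
  have hprod := EulerProduct.eulerProduct_completely_multiplicative_hasProd
    (f := roughPow r q) hsum
  have hfun : (fun p : Nat.Primes => (1 - roughPow r q p)⁻¹) =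
      Set.mulIndicator {p : Nat.Primes | q < (p : ℕ)}
        (fun p : Nat.Primes => (1 - ((p : ℕ) : ℝ) ^ (-r))⁻¹) := by
    funext P
    rw [roughPow_apply]
    by_cases hP : q < (P : ℕ)
    · rw [Set.mulIndicator_of_mem (show P ∈ {p : Nat.Primes | q < (p : ℕ)} from hP),
        if_pos ⟨P.2.ne_zero, by simp [P.2.primeFactors, hP]⟩]
    · rw [Set.mulIndicator_of_notMem
        (show P ∉ {p : Nat.Primes | q < (p : ℕ)} from hP), if_neg, sub_zero, inv_one]
      rintro ⟨-, h⟩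
      exact hP (h P (by simp [P.2.primeFactors]))
  calc uAfter r q
      = ∏' x : {p : Nat.Primes | q < (p : ℕ)},
          (1 - (((x : Nat.Primes) : ℕ) : ℝ) ^ (-r))⁻¹ := rfl
    _ = ∏' P : Nat.Primes, Set.mulIndicator {p : Nat.Primes | q < (p : ℕ)}
          (fun p : Nat.Primes => (1 - ((p : ℕ) : ℝ) ^ (-r))⁻¹) P := by
        exact tprod_subtype {p : Nat.Primes | q < (p : ℕ)}
          (fun p : Nat.Primes => (1 - ((p : ℕ) : ℝ) ^ (-r))⁻¹)
    _ = ∏' P : Nat.Primes, (1 - roughPow r q P)⁻¹ := by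
        exact tprod_congr fun P => (congrFun hfun P).symm
    _ = ∑' m, roughPow r q m := hprod.tprod_eq

lemma one_le_uAfter {r : ℝ} (hr : 1 < r) (p : ℕ) : 1 ≤ uAfter r p := by
  rw [uAfter_eq_tsum hr p]
  have h := Summable.le_tsum ((roughPow_summable_norm hr p).of_norm) 1
    (fun j _ => roughPow_nonneg r p j)
  simpa using h

theorem statement2 (r : ℝ) (hr : 1 < r) (p q : ℕ) (hp : p.Prime) (hq : q.Prime)
    (hpm : Mighty r p) (hqm : Mighty r q) (hpq : q ^ 2 < p)
    (n : ℕ) (hn : 0 < n)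
    (h1 : sigmaNeg r q * uAfter r p < sigmaNeg r n)
    (h2 : sigmaNeg r n < sigmaNeg r (q * p)) :
    q ∣ n := by
  by_contra hqn
  have hrpos : (0:ℝ) < r := by linarith
  have hsigq : sigmaNeg r q = 1 + (q : ℝ) ^ (-r) := by
    rw [sigmaNeg, hq.divisors, Finset.sum_pair (show (1:ℕ) ≠ q from hq.one_lt.ne)]
    norm_num
  by_cases hA : ∀ ℓ ∈ n.primeFactors, q < ℓ
  · -- all prime factors of n exceed q : σ(n) ≤ u_q < 1 + q^{-r} = σ(q) ≤ σ(q) u_p < σ(n)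
    have hle : sigmaNeg r n ≤ uAfter r q := by
      rw [uAfter_eq_tsum hr q, sigmaNeg]
      have hdg : ∀ d ∈ n.divisors, (d : ℝ) ^ (-r) = roughPow r q d := by
        intro d hd
        rw [roughPow_apply, if_pos]
        exact ⟨(Nat.pos_of_mem_divisors hd).ne', fun ℓ hℓ =>
          hA ℓ (Nat.primeFactors_mono (Nat.mem_divisors.mp hd).1 hn.ne' hℓ)⟩
      rw [Finset.sum_congr rfl hdg]
      exact Summable.sum_le_tsum n.divisors (fun m _ => roughPow_nonneg r q m)
        ((roughPow_summable_norm hr q).of_norm)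
    have h3 : sigmaNeg r q ≤ sigmaNeg r q * uAfter r p :=
      le_mul_of_one_le_right (by rw [hsigq]; positivity) (one_le_uAfter hr p)
    have hmq : uAfter r q < 1 + (q : ℝ) ^ (-r) := hqm
    linarith
  · -- some prime factor ℓ < q
    push_neg at hA
    obtain ⟨ℓ, hℓn, hℓq⟩ := hA
    rw [Nat.mem_primeFactors] at hℓn
    obtain ⟨hℓp, hℓd, -⟩ := hℓn
    have hℓltq : ℓ < q := lt_of_le_of_ne hℓq (fun h => hqn (h ▸ hℓd))
    have hℓ2 : 2 ≤ ℓ := hℓp.two_le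
    have hqge : 3 ≤ q := by omega
    have hp2 : 2 ≤ p := hp.two_le
    have h6 : 6 ≤ q * p := Nat.mul_le_mul hqge hp2
    have hqmul : q < q * p := lt_mul_of_one_lt_right hq.pos hp.one_lt
    have hpmul : p < q * p := lt_mul_of_one_lt_left hp.pos hq.one_lt
    have hqltp : q < p := by nlinarith
    -- lower bound : 1 + ℓ^{-r} ≤ σ(n)
    have hlow : 1 + (ℓ : ℝ) ^ (-r) ≤ sigmaNeg r n := by
      have hsub : ({1, ℓ} : Finset ℕ) ⊆ n.divisors := by
        intro d hd
        rcases Finset.mem_insert.mp hd with rfl | hd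
        · exact Nat.one_mem_divisors.mpr hn.ne'
        · rw [Finset.mem_singleton] at hd
          subst hd
          exact Nat.mem_divisors.mpr ⟨hℓd, hn.ne'⟩
      calc 1 + (ℓ : ℝ) ^ (-r) = ∑ d ∈ ({1, ℓ} : Finset ℕ), (d : ℝ) ^ (-r) := by
            rw [Finset.sum_pair (by omega : (1:ℕ) ≠ ℓ)]; norm_num
        _ ≤ sigmaNeg r n := Finset.sum_le_sum_of_subset_of_nonneg hsub
            (fun d _ _ => by positivity)
    -- upper bound for σ(q*p)
    have hsub2 : (q*p).divisors ⊆ ({1, q, p, q*p} : Finset ℕ) := by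
      intro d hd
      rw [Nat.mem_divisors] at hd
      have hcop : Nat.Coprime q p := (Nat.coprime_primes hq hp).mpr hqltp.ne
      have hgcd : Nat.gcd d q * Nat.gcd d p = d :=
        (Nat.gcd_mul_gcd_eq_iff_dvd_mul_of_coprime hcop).mpr hd.1
      have h1q : Nat.gcd d q = 1 ∨ Nat.gcd d q = q :=
        (Nat.dvd_prime hq).mp (Nat.gcd_dvd_right d q)
      have h1p : Nat.gcd d p = 1 ∨ Nat.gcd d p = p :=
        (Nat.dvd_prime hp).mp (Nat.gcd_dvd_right d p)
      simp only [Finset.mem_insert, Finset.mem_singleton]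
      rcases h1q with hx | hx <;> rcases h1p with hy | hy <;> rw [hx, hy] at hgcd
      · left; omega
      · right; right; left; omega
      · right; left; omega
      · right; right; right; exact hgcd.symm
    have hsum4 : ∑ d ∈ ({1, q, p, q*p} : Finset ℕ), (d : ℝ) ^ (-r)
        = 1 + (q:ℝ)^(-r) + (p:ℝ)^(-r) + ((q*p : ℕ):ℝ)^(-r) := by
      have e1 : (1:ℕ) ∉ ({q, p, q*p} : Finset ℕ) := by
        simp only [Finset.mem_insert, Finset.mem_singleton]; omega
      have e2 : q ∉ ({p, q*p} : Finset ℕ) := by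
        simp only [Finset.mem_insert, Finset.mem_singleton]; omega
      have e3 : p ∉ ({q*p} : Finset ℕ) := by
        simp only [Finset.mem_singleton]; omega
      rw [Finset.sum_insert e1, Finset.sum_insert e2, Finset.sum_insert e3,
        Finset.sum_singleton, Nat.cast_one, Real.one_rpow]
      ring
    have hup : sigmaNeg r (q*p) ≤ 1 + (q:ℝ)^(-r) + (p:ℝ)^(-r) + ((q*p : ℕ):ℝ)^(-r) := by
      rw [sigmaNeg, ← hsum4]
      exact Finset.sum_le_sum_of_subset_of_nonneg hsub2 (fun d _ _ => by positivity)
    -- numeric inequality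
    have hQ2 : (2:ℝ) ≤ (q:ℝ) := by exact_mod_cast hq.two_le
    have hQpos : (0:ℝ) < (q:ℝ) := by linarith
    have hx0 : 0 < (q:ℝ)^(-r) := Real.rpow_pos_of_pos hQpos _
    have hx2 : ((q:ℝ)*(q:ℝ)) ^ (-r) = ((q:ℝ)^(-r))^2 := by
      rw [Real.mul_rpow hQpos.le hQpos.le, sq]
    have hx3 : ((q:ℝ)*(q:ℝ)*(q:ℝ)) ^ (-r) = ((q:ℝ)^(-r))^3 := by
      rw [Real.mul_rpow (by positivity) hQpos.le, hx2]
      ring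
    have hq2p : ((q:ℝ)*(q:ℝ)) < (p:ℝ) := by
      have : ((q^2 : ℕ):ℝ) < (p:ℝ) := by exact_mod_cast hpq
      push_cast at this
      nlinarith
    have hb1 : (p:ℝ)^(-r) < ((q:ℝ)^(-r))^2 := by
      rw [← hx2]
      exact rpow_neg_lt_rpow_neg (by positivity) hq2p hrpos
    have hb2 : ((q*p : ℕ):ℝ)^(-r) < ((q:ℝ)^(-r))^3 := by
      rw [← hx3]
      refine rpow_neg_lt_rpow_neg (by positivity) ?_ hrpos
      push_cast
      nlinarith
    -- (q-1)^r + 1 ≤ q^r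
    have hkey : ((q:ℝ) - 1)^r + 1 ≤ (q:ℝ)^r := by
      have h := NNReal.add_rpow_le_rpow_add ((q-1 : ℕ) : ℝ≥0) 1 hr.le
      rw [NNReal.one_rpow] at h
      have hcast : ((q-1 : ℕ) : ℝ≥0) + 1 = ((q : ℕ) : ℝ≥0) := by
        have h' : (q - 1) + 1 = q := by omega
        exact_mod_cast congrArg (Nat.cast : ℕ → ℝ≥0) h'
      rw [hcast] at h
      have h' := NNReal.coe_le_coe.mpr h
      push_cast [NNReal.coe_sub (show (1:ℝ≥0) ≤ (q:ℝ≥0) from by exact_mod_cast hq.one_le)] at h'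
      linarith
    have hz1 : (1:ℝ) < (q:ℝ)^r := by
      rw [← Real.one_rpow r]
      exact Real.rpow_lt_rpow (by norm_num) (by linarith) hrpos
    have hy0 : (0:ℝ) < ((q:ℝ)-1)^r := Real.rpow_pos_of_pos (by linarith) _
    have hxz : (q:ℝ)^(-r) * (q:ℝ)^r = 1 := by
      rw [Real.rpow_neg hQpos.le]
      exact inv_mul_cancel₀ (by positivity)
    have hgeom : (q:ℝ)^(-r) + ((q:ℝ)^(-r))^2 + ((q:ℝ)^(-r))^3 ≤ (((q:ℝ)-1)^r)⁻¹ := by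
      have step1 : (q:ℝ)^(-r) + ((q:ℝ)^(-r))^2 + ((q:ℝ)^(-r))^3 ≤ ((q:ℝ)^r - 1)⁻¹ := by
        rw [inv_eq_one_div, le_div_iff₀ (by linarith)]
        have e1 : ((q:ℝ)^(-r))^2 * (q:ℝ)^r = (q:ℝ)^(-r) := by
          rw [sq, mul_assoc, hxz, mul_one]
        have e2 : ((q:ℝ)^(-r))^3 * (q:ℝ)^r = ((q:ℝ)^(-r))^2 := by
          rw [pow_succ, mul_assoc, hxz, mul_one]
        nlinarith [pow_pos hx0 3]
      refine step1.trans (inv_anti₀ hy0 (by linarith))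
    have hLb : (((q:ℝ)-1)^r)⁻¹ ≤ (ℓ:ℝ)^(-r) := by
      rw [← Real.rpow_neg (by linarith : (0:ℝ) ≤ (q:ℝ)-1)]
      refine rpow_neg_le_rpow_neg (by exact_mod_cast hℓp.pos) ?_ hrpos
      have hc : (ℓ:ℝ) + 1 ≤ (q:ℝ) := by exact_mod_cast hℓltq
      linarith
    have : sigmaNeg r (q*p) < sigmaNeg r n := by
      calc sigmaNeg r (q*p)
          ≤ 1 + (q:ℝ)^(-r) + (p:ℝ)^(-r) + ((q*p:ℕ):ℝ)^(-r) := hup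
        _ < 1 + ((q:ℝ)^(-r) + ((q:ℝ)^(-r))^2 + ((q:ℝ)^(-r))^3) := by linarith
        _ ≤ 1 + (ℓ:ℝ)^(-r) := by linarith [hgeom.trans hLb]
        _ ≤ sigmaNeg r n := hlow
    linarith
end

section
/- Let r > 2.2 be a real number and let p and q be primes with p > q². Then σ_{-r}(q·p) < σ_{-r}(q²); equivalently, p^{-r} + (qp)^{-r} < q^{-2r}. -/
open scoped BigOperators

theorem statement3 (r : ℝ) (hr : (2.2 : ℝ) < r) (p q : ℕ) (hp : p.Prime) (hq : q.Prime)
    (hpq : q ^ 2 < p) :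
    sigmaNeg r (q * p) < sigmaNeg r (q ^ 2) := by
  unfold sigmaNeg
  have hq2 : 2 ≤ q := hq.two_le
  have hqp : q < p := lt_of_le_of_lt (Nat.le_self_pow two_ne_zero q) hpq
  have hq1 : (1:ℝ) < q := by exact_mod_cast lt_of_lt_of_le one_lt_two (by exact_mod_cast hq2)
  have hq0 : (0:ℝ) < q := by linarith
  have hp0 : (0:ℝ) < p := by exact_mod_cast hp.pos
  have hr1 : (1:ℝ) ≤ r := by nlinarith
  have hr0 : (0:ℝ) ≤ r := by linarith
  have hd : (q*p).divisors = {1, q, p, q*p} := by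
    rw [Nat.divisors_mul, hq.divisors, hp.divisors]
    ext x
    simp [Finset.mem_mul]
    tauto
  have h1q : 1 < q := hq.one_lt
  have h1p : 1 < p := hp.one_lt
  have hqne : q ≠ p := hqp.ne
  have hA : (0:ℝ) < (p:ℝ)^(-r) := Real.rpow_pos_of_pos hp0 _
  have hq2pos : (0:ℝ) < (q:ℝ)^2 := by positivity
  have hB : (0:ℝ) < ((q:ℝ)^2)^(-r) := Real.rpow_pos_of_pos hq2pos _
  have key : (p:ℝ)^(-r) + ((q:ℝ)*(p:ℝ))^(-r) < ((q:ℝ)^2)^(-r) := by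
    have hmul : ((q:ℝ)*(p:ℝ))^(-r) = (q:ℝ)^(-r)*(p:ℝ)^(-r) := Real.mul_rpow hq0.le hp0.le
    have hb : (q:ℝ)^(-r) < r * ((q:ℝ)^2)⁻¹ := by
      have h1 : (q:ℝ)^(-r) < (q:ℝ)^(-(2:ℝ)) :=
        Real.rpow_lt_rpow_of_exponent_lt hq1 (by linarith)
      have h2 : (q:ℝ)^(-(2:ℝ)) = ((q:ℝ)^2)⁻¹ := by
        rw [Real.rpow_neg hq0.le]
        norm_num [Real.rpow_natCast]
      have h3 : ((q:ℝ)^2)⁻¹ ≤ r * ((q:ℝ)^2)⁻¹ := by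
        nlinarith [inv_pos.mpr hq2pos]
      linarith [h2 ▸ h1]
    have hbern : 1 + r * ((q:ℝ)^2)⁻¹ ≤ (1 + ((q:ℝ)^2)⁻¹)^r :=
      one_add_mul_self_le_rpow_one_add (by have := inv_pos.mpr hq2pos; linarith) hr1
    have hstep : 1 + (q:ℝ)^(-r) < (1 + ((q:ℝ)^2)⁻¹)^r := by linarith
    have hsplit : (1 + ((q:ℝ)^2)⁻¹)^r = ((q:ℝ)^2+1)^r * ((q:ℝ)^2)^(-r) := by
      have he : ((q:ℝ)^2+1) * ((q:ℝ)^2)⁻¹ = 1 + ((q:ℝ)^2)⁻¹ := by field_simp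
      rw [← he, Real.mul_rpow (by positivity) (by positivity),
        Real.rpow_neg hq2pos.le, Real.inv_rpow hq2pos.le]
    have hfin : ((q:ℝ)^2+1)^r ≤ (p:ℝ)^r := by
      apply Real.rpow_le_rpow (by positivity) _ hr0
      have : q^2+1 ≤ p := hpq
      exact_mod_cast this
    calc (p:ℝ)^(-r) + ((q:ℝ)*(p:ℝ))^(-r) = (p:ℝ)^(-r) * (1 + (q:ℝ)^(-r)) := by
          rw [hmul]; ring
      _ < (p:ℝ)^(-r) * ((1 + ((q:ℝ)^2)⁻¹)^r) := by
          exact mul_lt_mul_of_pos_left hstep hA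
      _ = (p:ℝ)^(-r) * ((q:ℝ)^2+1)^r * ((q:ℝ)^2)^(-r) := by rw [hsplit]; ring
      _ ≤ (p:ℝ)^(-r) * (p:ℝ)^r * ((q:ℝ)^2)^(-r) := by
          exact mul_le_mul_of_nonneg_right (mul_le_mul_of_nonneg_left hfin hA.le) hB.le
      _ = ((q:ℝ)^2)^(-r) := by
          rw [← Real.rpow_add hp0]; norm_num
  have hqlt : q < q*p := by nlinarith
  have hplt : p < q*p := by nlinarith
  have h1lt : 1 < q*p := by nlinarith
  rw [hd, Nat.sum_divisors_prime_pow hq]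
  rw [show ({1,q,p,q*p}:Finset ℕ) = insert 1 (insert q (insert p {q*p})) from rfl]
  rw [Finset.sum_insert (by simp; omega), Finset.sum_insert (by simp; omega),
    Finset.sum_insert (by simp; omega), Finset.sum_singleton]
  rw [Finset.sum_range_succ, Finset.sum_range_succ, Finset.sum_range_one]
  push_cast
  rw [Real.one_rpow, pow_zero, Real.one_rpow, pow_one]
  linarith [key]
end

section
/- Let r > 1 be a real number and let n be a positive integer such that p^k ≤ r − 1 whenever p is a prime, k ≥ 1, and p^k divides n. Then σ_{-r}(n) is the right endpoint of a gap of cl(σ_{-r}(ℕ)): there exists ε > 0 such that the open interval (σ_{-r}(n) − ε, σ_{-r}(n)) is disjoint from cl(σ_{-r}(ℕ)), while σ_{-r}(n) ∈ cl(σ_{-r}(ℕ)). -/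
open scoped BigOperators

noncomputable def tailS (r : ℝ) (d : ℕ) : ℝ := ∑' e : ℕ, ((e + (d + 1) : ℕ) : ℝ) ^ (-r)

lemma summable_shift (r : ℝ) (hr : 1 < r) (k : ℕ) :
    Summable (fun e : ℕ => ((e + k : ℕ) : ℝ) ^ (-r)) := by
  have h0 : Summable (fun n : ℕ => (n : ℝ) ^ (-r)) :=
    Real.summable_nat_rpow.2 (by linarith)
  exact (summable_nat_add_iff k).2 h0

lemma step_lemma (r : ℝ) (hr2 : 2 ≤ r) (b : ℝ) (hb : 1 ≤ b) :
    (r - 1) * (b + 1) ^ (-r) < b ^ (1 - r) - (b + 1) ^ (1 - r) := by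
  have hb0 : (0:ℝ) < b := by linarith
  have hb1 : (0:ℝ) < b + 1 := by linarith
  have hbern : 1 + (r - 1) * (1 / b) ≤ (1 + 1 / b) ^ (r - 1) :=
    one_add_mul_self_le_rpow_one_add (by nlinarith [one_div_pos.2 hb0]) (by linarith)
  have h1 : (1:ℝ) + 1 / b = (b + 1) / b := by field_simp
  have hid : (b + 1) ^ (1 - r) * ((b + 1) / b) ^ (r - 1) = b ^ (1 - r) := by
    rw [Real.div_rpow hb1.le hb0.le, div_eq_mul_inv, ← Real.rpow_neg hb0.le, ← mul_assoc,
      ← Real.rpow_add hb1]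
    norm_num
  have hpow1 : (0:ℝ) < (b + 1) ^ (1 - r) := Real.rpow_pos_of_pos hb1 _
  have hsplit : (b + 1) ^ (1 - r) = (b + 1) * (b + 1) ^ (-r) := by
    rw [show (1 : ℝ) - r = 1 + (-r) by ring, Real.rpow_add hb1, Real.rpow_one]
  have key1 : b ^ (1 - r) - (b + 1) ^ (1 - r) ≥ (b + 1) ^ (1 - r) * ((r - 1) / b) := by
    have : ((b + 1) / b) ^ (r - 1) - 1 ≥ (r - 1) * (1 / b) := by
      rw [← h1]; linarith
    calc b ^ (1 - r) - (b + 1) ^ (1 - r)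
        = (b + 1) ^ (1 - r) * (((b + 1) / b) ^ (r - 1) - 1) := by rw [mul_sub, hid]; ring
      _ ≥ (b + 1) ^ (1 - r) * ((r - 1) / b) := by
          apply mul_le_mul_of_nonneg_left _ hpow1.le
          rw [div_eq_mul_one_div]; exact this
  have key2 : (b + 1) ^ (1 - r) * ((r - 1) / (b + 1)) < (b + 1) ^ (1 - r) * ((r - 1) / b) := by
    apply mul_lt_mul_of_pos_left _ hpow1
    apply div_lt_div_of_pos_left (by linarith) hb0 (by linarith)
  have key3 : (b + 1) ^ (1 - r) * ((r - 1) / (b + 1)) = (r - 1) * (b + 1) ^ (-r) := by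
    rw [hsplit]; field_simp
  linarith

lemma tail_le (r : ℝ) (hr2 : 2 ≤ r) (d : ℕ) (hd : 1 ≤ d) :
    (r - 1) * tailS r d ≤ (d : ℝ) ^ (1 - r) := by
  rw [tailS, ← tsum_mul_left]
  apply Real.tsum_le_of_sum_range_le
  · intro e
    have : (0:ℝ) ≤ ((e + (d + 1) : ℕ) : ℝ) ^ (-r) := Real.rpow_nonneg (by positivity) _
    nlinarith
  · intro N
    set G : ℕ → ℝ := fun e => ((d + e : ℕ) : ℝ) ^ (1 - r) with hG
    have tele : ∑ e ∈ Finset.range N, (G e - G (e + 1)) = G 0 - G N :=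
      Finset.sum_range_sub' G N
    have hterm : ∀ e ∈ Finset.range N,
        (r - 1) * ((e + (d + 1) : ℕ) : ℝ) ^ (-r) ≤ G e - G (e + 1) := by
      intro e _
      have hb : (1:ℝ) ≤ (d : ℝ) + (e : ℝ) := by
        have h1 : (1:ℝ) ≤ (d : ℝ) := by exact_mod_cast hd
        have h2 : (0:ℝ) ≤ (e : ℝ) := by positivity
        linarith
      have := (step_lemma r hr2 ((d : ℝ) + (e : ℝ)) hb).le
      have hc1 : ((e + (d + 1) : ℕ) : ℝ) = (d : ℝ) + (e : ℝ) + 1 := by push_cast; ring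
      have hc2 : G e = ((d : ℝ) + (e : ℝ)) ^ (1 - r) := by rw [hG]; push_cast; ring_nf
      have hc3 : G (e + 1) = ((d : ℝ) + (e : ℝ) + 1) ^ (1 - r) := by rw [hG]; push_cast; ring_nf
      rw [hc1, hc2, hc3]
      linarith
    have hGN : 0 ≤ G N := Real.rpow_nonneg (by positivity) _
    have hG0 : G 0 = (d : ℝ) ^ (1 - r) := by rw [hG]; norm_num
    calc ∑ e ∈ Finset.range N, (r - 1) * ((e + (d + 1) : ℕ) : ℝ) ^ (-r)
        ≤ ∑ e ∈ Finset.range N, (G e - G (e + 1)) := Finset.sum_le_sum hterm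
      _ = G 0 - G N := tele
      _ ≤ (d : ℝ) ^ (1 - r) := by rw [hG0]; linarith

lemma tail_lt (r : ℝ) (hr2 : 2 ≤ r) (d : ℕ) (hd : 1 ≤ d) :
    (r - 1) * tailS r d < (d : ℝ) ^ (1 - r) := by
  have hsum := summable_shift r (by linarith) (d + 1)
  have hzero : tailS r d
      = ((0 + (d + 1) : ℕ) : ℝ) ^ (-r) + ∑' e : ℕ, ((e + 1 + (d + 1) : ℕ) : ℝ) ^ (-r) :=
    Summable.tsum_eq_zero_add hsum
  have hshift : (∑' e : ℕ, ((e + 1 + (d + 1) : ℕ) : ℝ) ^ (-r)) = tailS r (d + 1) := by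
    rw [tailS]
    apply tsum_congr
    intro e
    congr 2
    ring
  have hstep := step_lemma r hr2 (d : ℝ) (by exact_mod_cast hd)
  have htail := tail_le r hr2 (d + 1) (by omega)
  have hc1 : ((0 + (d + 1) : ℕ) : ℝ) = (d : ℝ) + 1 := by push_cast; ring
  have hc2 : ((d + 1 : ℕ) : ℝ) = (d : ℝ) + 1 := by push_cast; ring
  rw [hzero, hshift, hc1]
  rw [hc2] at htail
  nlinarith [htail, hstep]

lemma sum_le_tail (r : ℝ) (hr : 1 < r) (d : ℕ) (F : Finset ℕ)
    (hF : ∀ e ∈ F, d + 1 ≤ e) : (∑ e ∈ F, (e : ℝ) ^ (-r)) ≤ tailS r d := by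
  have hHnn : ∀ e : ℕ, 0 ≤ (if d + 1 ≤ e then (e : ℝ) ^ (-r) else 0) := by
    intro e
    split
    · exact Real.rpow_nonneg (by positivity) _
    · exact le_rfl
  have hHsum : Summable (fun e : ℕ => if d + 1 ≤ e then (e : ℝ) ^ (-r) else 0) := by
    apply Summable.of_nonneg_of_le hHnn (fun e => ?_)
      (Real.summable_nat_rpow.2 (by linarith : (-r) < -1))
    split
    · exact le_rfl
    · exact Real.rpow_nonneg (by positivity) _
  calc (∑ e ∈ F, (e : ℝ) ^ (-r))
      = ∑ e ∈ F, (if d + 1 ≤ e then (e : ℝ) ^ (-r) else 0) :=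
        Finset.sum_congr rfl (fun e he => (if_pos (hF e he)).symm)
    _ ≤ ∑' e : ℕ, (if d + 1 ≤ e then (e : ℝ) ^ (-r) else 0) :=
        Summable.sum_le_tsum F (fun i _ => hHnn i) hHsum
    _ = tailS r d := by
        rw [← Summable.sum_add_tsum_nat_add (d + 1) hHsum,
          Finset.sum_eq_zero (fun i hi => if_neg (by simp at hi; omega)), zero_add, tailS]
        exact tsum_congr fun e => if_pos (by omega)

theorem statement11 (r : ℝ) (hr : 1 < r) (n : ℕ) (hn : 0 < n)
    (h : ∀ p k : ℕ, p.Prime → 1 ≤ k → p ^ k ∣ n → ((p ^ k : ℕ) : ℝ) ≤ r - 1) :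
    sigmaNeg r n ∈ sigmaClosure r ∧
      ∃ ε > 0, Set.Ioo (sigmaNeg r n - ε) (sigmaNeg r n) ∩ sigmaClosure r = ∅ := by
  have hfnn : ∀ e : ℕ, 0 ≤ (e : ℝ) ^ (-r) := fun e => Real.rpow_nonneg (by positivity) _
  have hgpos : ∀ d ∈ n.divisors.filter (fun d : ℕ => (d : ℝ) ≤ r - 1),
      0 < (d : ℝ) ^ (-r) - tailS r d := by
    intro d hd
    obtain ⟨hdvd, hdr⟩ := Finset.mem_filter.1 hd
    have hd1 : 1 ≤ d := Nat.pos_of_mem_divisors hdvd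
    have hd1' : (1 : ℝ) ≤ (d : ℝ) := by exact_mod_cast hd1
    have hr2 : 2 ≤ r := by linarith
    have hlt := tail_lt r hr2 d hd1
    have hdpos : (0 : ℝ) < (d : ℝ) := by linarith
    have hsplit : (d : ℝ) ^ (1 - r) = (d : ℝ) * (d : ℝ) ^ (-r) := by
      rw [show (1 : ℝ) - r = 1 + (-r) by ring, Real.rpow_add hdpos, Real.rpow_one]
    have hmul : (r - 1) * tailS r d < (r - 1) * ((d : ℝ) ^ (-r)) := by
      calc (r - 1) * tailS r d < (d : ℝ) ^ (1 - r) := hlt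
        _ = (d : ℝ) * (d : ℝ) ^ (-r) := hsplit
        _ ≤ (r - 1) * ((d : ℝ) ^ (-r)) := mul_le_mul_of_nonneg_right (by linarith) (hfnn d)
    have := lt_of_mul_lt_mul_left (a := r - 1) hmul (by linarith)
    linarith
  obtain ⟨ε, hεpos, hεle⟩ : ∃ ε > 0, ∀ d ∈ n.divisors.filter (fun d : ℕ => (d : ℝ) ≤ r - 1),
      ε ≤ (d : ℝ) ^ (-r) - tailS r d := by
    by_cases hS : (n.divisors.filter (fun d : ℕ => (d : ℝ) ≤ r - 1)).Nonempty
    · refine ⟨(n.divisors.filter (fun d : ℕ => (d : ℝ) ≤ r - 1)).inf' hS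
        (fun d => (d : ℝ) ^ (-r) - tailS r d), ?_, fun d hd => Finset.inf'_le _ hd⟩
      rw [gt_iff_lt, Finset.lt_inf'_iff]
      exact hgpos
    · exact ⟨1, one_pos, fun d hd => absurd ⟨d, hd⟩ hS⟩
  have key : ∀ m : ℕ, 0 < m →
      sigmaNeg r n ≤ sigmaNeg r m ∨ sigmaNeg r m ≤ sigmaNeg r n - ε := by
    intro m hm
    have hsplitn : sigmaNeg r n = (∑ e ∈ n.divisors \ m.divisors, (e : ℝ) ^ (-r))
        + ∑ e ∈ n.divisors ∩ m.divisors, (e : ℝ) ^ (-r) := by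
      rw [sigmaNeg, ← Finset.sum_union (Finset.disjoint_sdiff_inter _ _),
        Finset.sdiff_union_inter]
    have hsplitm : sigmaNeg r m = (∑ e ∈ m.divisors \ n.divisors, (e : ℝ) ^ (-r))
        + ∑ e ∈ n.divisors ∩ m.divisors, (e : ℝ) ^ (-r) := by
      rw [sigmaNeg, Finset.inter_comm, ← Finset.sum_union (Finset.disjoint_sdiff_inter _ _),
        Finset.sdiff_union_inter]
    by_cases hT : n.divisors \ m.divisors = ∅
    · left
      rw [hsplitn, hT, Finset.sum_empty, zero_add, hsplitm]
      have : 0 ≤ ∑ e ∈ m.divisors \ n.divisors, (e : ℝ) ^ (-r) :=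
        Finset.sum_nonneg (fun i _ => hfnn i)
      linarith
    · have hTne : (n.divisors \ m.divisors).Nonempty := Finset.nonempty_of_ne_empty hT
      set d0 := (n.divisors \ m.divisors).min' hTne with hd0
      have hd0mem : d0 ∈ n.divisors \ m.divisors := Finset.min'_mem _ _
      have hd0n : d0 ∣ n := (Nat.mem_divisors.1 (Finset.mem_sdiff.1 hd0mem).1).1
      have hd0m : ¬ d0 ∣ m := fun hdvd =>
        (Finset.mem_sdiff.1 hd0mem).2 (Nat.mem_divisors.2 ⟨hdvd, hm.ne'⟩)
      obtain ⟨p, k, hp, hpk_d0, hpk_m⟩ : ∃ p k, Nat.Prime p ∧ p ^ k ∣ d0 ∧ ¬ p ^ k ∣ m := by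
        by_contra hcon
        push_neg at hcon
        exact hd0m ((Nat.dvd_iff_prime_pow_dvd_dvd m d0).2
          (fun p k hp hdvd => hcon p k hp hdvd))
      have hk1 : 1 ≤ k := by
        rcases Nat.eq_zero_or_pos k with h0 | hpos
        · exact absurd (by rw [h0, pow_zero]; exact one_dvd _) hpk_m
        · exact hpos
      have hpkn : p ^ k ∣ n := hpk_d0.trans hd0n
      have hpkmem : p ^ k ∈ n.divisors \ m.divisors := Finset.mem_sdiff.2
        ⟨Nat.mem_divisors.2 ⟨hpkn, hn.ne'⟩,
          fun hmem => hpk_m (Nat.mem_divisors.1 hmem).1⟩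
      have hd0pos : 0 < d0 := Nat.pos_of_mem_divisors (Finset.mem_sdiff.1 hd0mem).1
      have heq : p ^ k = d0 :=
        le_antisymm (Nat.le_of_dvd hd0pos hpk_d0) (Finset.min'_le _ _ hpkmem)
      have hd0r : (d0 : ℝ) ≤ r - 1 := by
        rw [← heq]
        exact h p k hp hk1 hpkn
      have hd0Sfin : d0 ∈ n.divisors.filter (fun d : ℕ => (d : ℝ) ≤ r - 1) :=
        Finset.mem_filter.2 ⟨Nat.mem_divisors.2 ⟨hd0n, hn.ne'⟩, hd0r⟩
      by_cases hMall : ∀ e ∈ m.divisors \ n.divisors, d0 + 1 ≤ e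
      · right
        have h1 : (∑ e ∈ m.divisors \ n.divisors, (e : ℝ) ^ (-r)) ≤ tailS r d0 :=
          sum_le_tail r hr d0 _ hMall
        have h2 : (d0 : ℝ) ^ (-r) ≤ ∑ e ∈ n.divisors \ m.divisors, (e : ℝ) ^ (-r) :=
          Finset.single_le_sum (fun i _ => hfnn i) hd0mem
        have h3 := hεle d0 hd0Sfin
        rw [hsplitn, hsplitm]
        linarith
      · left
        push_neg at hMall
        obtain ⟨e1, he1mem, he1lt⟩ := hMall
        have he1M : e1 ∈ m.divisors := (Finset.mem_sdiff.1 he1mem).1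
        have hd0M : d0 ∉ m.divisors := (Finset.mem_sdiff.1 hd0mem).2
        have he1d0 : e1 < d0 := lt_of_le_of_ne (by omega) (fun hh => hd0M (hh ▸ he1M))
        have he1pos : 0 < e1 := Nat.pos_of_mem_divisors he1M
        have hd0r1 : (1 : ℝ) ≤ (d0 : ℝ) := by exact_mod_cast hd0pos
        have hr2 : 2 ≤ r := by linarith
        have hNall : ∀ e ∈ n.divisors \ m.divisors, e1 + 1 ≤ e := by
          intro e he
          have := Finset.min'_le (n.divisors \ m.divisors) e he
          omega
        have h1 : (∑ e ∈ n.divisors \ m.divisors, (e : ℝ) ^ (-r)) ≤ tailS r e1 :=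
          sum_le_tail r hr e1 _ hNall
        have he1r : (e1 : ℝ) ≤ r - 1 := by
          have hh : (e1 : ℝ) + 1 ≤ (d0 : ℝ) := by exact_mod_cast he1d0
          linarith
        have htail := tail_le r hr2 e1 he1pos
        have he1pos' : (0 : ℝ) < (e1 : ℝ) := by exact_mod_cast he1pos
        have hsplit : (e1 : ℝ) ^ (1 - r) = (e1 : ℝ) * (e1 : ℝ) ^ (-r) := by
          rw [show (1 : ℝ) - r = 1 + (-r) by ring, Real.rpow_add he1pos', Real.rpow_one]
        have h2 : tailS r e1 ≤ (e1 : ℝ) ^ (-r) := by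
          have hmul : (r - 1) * tailS r e1 ≤ (r - 1) * ((e1 : ℝ) ^ (-r)) := by
            calc (r - 1) * tailS r e1 ≤ (e1 : ℝ) ^ (1 - r) := htail
              _ = (e1 : ℝ) * (e1 : ℝ) ^ (-r) := hsplit
              _ ≤ (r - 1) * ((e1 : ℝ) ^ (-r)) :=
                mul_le_mul_of_nonneg_right (by linarith) (hfnn e1)
          exact le_of_mul_le_mul_left hmul (by linarith)
        have h3 : (e1 : ℝ) ^ (-r) ≤ ∑ e ∈ m.divisors \ n.divisors, (e : ℝ) ^ (-r) :=
          Finset.single_le_sum (fun i _ => hfnn i) he1mem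
        rw [hsplitn, hsplitm]
        linarith
  constructor
  · exact subset_closure ⟨⟨n, hn⟩, rfl⟩
  · refine ⟨ε, hεpos, ?_⟩
    rw [Set.eq_empty_iff_forall_notMem]
    rintro x ⟨hx1, hx2⟩
    rw [sigmaClosure] at hx2
    obtain ⟨y, hyIoo, hyrange⟩ := mem_closure_iff.1 hx2 _ isOpen_Ioo hx1
    obtain ⟨mp, rfl⟩ := hyrange
    rcases key (mp : ℕ) mp.pos with hcase | hcase
    · exact absurd hyIoo.2 (not_lt.2 hcase)
    · linarith [hyIoo.1]
end

section
/- Let r ≥ 2 be a real number, let n be a positive integer such that p^k ≤ r − 1 whenever p is a prime, k ≥ 1, and p^k divides n, and set ε = min over positive integers d with d ≤ r − 1 of (d^{-r} − ∑_{k = d+1}^{∞} k^{-r}). Then ε > 0, and for every positive integer m, either σ_{-r}(m) ≥ σ_{-r}(n) or σ_{-r}(m) ≤ σ_{-r}(n) − ε. -/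
open scoped BigOperators

open Real Filter

private lemma step_ineq' {r t : ℝ} (hr : 2 ≤ r) (ht : 2 ≤ t) :
    (r - 1) * t ^ (-r) < (t-1) ^ (1-r) - t ^ (1-r) := by
  have ht1 : (0:ℝ) < t - 1 := by linarith
  have ht0 : (0:ℝ) < t := by linarith
  have hs : (0:ℝ) ≤ 1/(t-1) := by positivity
  have hb := one_add_mul_self_le_rpow_one_add (s := 1/(t-1)) (by linarith) (p := r - 1)
    (by linarith)
  have hrew : (1 + 1/(t-1)) = t / (t-1) := by field_simp; ring
  rw [hrew] at hb
  have hAB : 1 + (r-1) / t < (t / (t-1)) ^ (r-1) := by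
    refine lt_of_lt_of_le ?_ hb
    have : (r-1)/t < (r-1) * (1/(t-1)) := by
      rw [mul_one_div]
      exact div_lt_div_of_pos_left (by linarith) ht1 (by linarith)
    linarith
  have hdiv : (t / (t-1)) ^ (r-1) = t ^ (r-1) / (t-1) ^ (r-1) :=
    Real.div_rpow ht0.le ht1.le (r-1)
  set A := t ^ (r-1) with hA
  set B := (t-1) ^ (r-1) with hB
  have hApos : 0 < A := Real.rpow_pos_of_pos ht0 _
  have hBpos : 0 < B := Real.rpow_pos_of_pos ht1 _
  rw [hdiv] at hAB
  have key : (1 + (r-1)/t) * B < A := by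
    rw [← lt_div_iff₀ hBpos]; exact hAB
  have key2 : B * t + (r-1) * B < A * t := by
    have := mul_lt_mul_of_pos_right key ht0
    have hid : (1 + (r-1)/t) * B * t = B * t + (r-1) * B := by field_simp
    linarith [hid ▸ this]
  have e1 : t ^ (1-r) = A⁻¹ := by
    rw [show (1-r) = -(r-1) by ring, Real.rpow_neg ht0.le]
  have e2 : (t-1) ^ (1-r) = B⁻¹ := by
    rw [show (1-r) = -(r-1) by ring, Real.rpow_neg ht1.le]
  have hAt : A * t = t ^ r := by
    rw [hA, ← Real.rpow_add_one ht0.ne']; norm_num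
  have e3 : t ^ (-r) = (A * t)⁻¹ := by rw [hAt, Real.rpow_neg ht0.le]
  rw [e1, e2, e3]
  have expand : B⁻¹ - A⁻¹ - (r-1) * (A*t)⁻¹ = (A*t - B*t - (r-1)*B) / (A*B*t) := by
    field_simp
  have pos : 0 < (A*t - B*t - (r-1)*B) / (A*B*t) := div_pos (by linarith) (by positivity)
  linarith [expand ▸ pos]

private lemma tail_lt' {r : ℝ} (hr : 2 ≤ r) {d : ℕ} (hd : 0 < d) (hdr : (d:ℝ) ≤ r - 1) :
    (∑' m : {m : ℕ // d < m}, ((m : ℕ) : ℝ) ^ (-r)) < (d:ℝ) ^ (-r) := by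
  have hr1 : (1:ℝ) < r := by linarith
  have hrpos : (0:ℝ) < r - 1 := by linarith
  set F : ℕ → ℝ := fun k => if d < k then (k:ℝ) ^ (-r) else 0 with hF
  have hFnonneg : ∀ k, 0 ≤ F k := by
    intro k; simp only [hF]
    split
    · positivity
    · exact le_refl 0
  have hFle : ∀ k, F k ≤ (k:ℝ) ^ (-r) := by
    intro k; simp only [hF]
    split
    · exact le_refl _
    · positivity
  have hFsum : Summable F :=
    Summable.of_nonneg_of_le hFnonneg hFle
      (Real.summable_nat_rpow.mpr (by linarith : -r < -1))
  have htail : (∑' m : {m : ℕ // d < m}, ((m : ℕ) : ℝ) ^ (-r)) = ∑' k, F k := by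
    have h1 := tsum_subtype {m : ℕ | d < m} (fun k => (k:ℝ) ^ (-r))
    refine h1.trans (tsum_congr fun k => ?_)
    simp [Set.indicator_apply, hF]
  set H : ℕ → ℝ := fun k => ((max k d : ℕ) : ℝ) ^ (1-r) / (r-1) with hH
  set G : ℕ → ℝ := fun k => H k - H (k+1) with hG
  have hmaxpos : ∀ k : ℕ, (0:ℝ) < ((max k d : ℕ) : ℝ) := by
    intro k
    have : 0 < max k d := lt_of_lt_of_le hd (le_max_right k d)
    exact_mod_cast this
  have hGnonneg : ∀ k, 0 ≤ G k := by
    intro k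
    simp only [hG, hH, sub_nonneg]
    have h1 : ((max (k+1) d : ℕ) : ℝ) ^ (1-r) ≤ ((max k d : ℕ) : ℝ) ^ (1-r) := by
      apply Real.rpow_le_rpow_of_nonpos (hmaxpos k) ?_ (by linarith : 1 - r ≤ 0)
      exact_mod_cast max_le_max (Nat.le_succ k) (le_refl d)
    simp only [div_eq_mul_inv]
    exact mul_le_mul_of_nonneg_right h1 (by positivity)
  have hH0 : Tendsto H atTop (nhds 0) := by
    have t1 := tendsto_rpow_neg_atTop hrpos
    simp only [show -(r-1) = 1-r from by ring] at t1
    have t2 : Tendsto (fun k : ℕ => ((max k d : ℕ) : ℝ)) atTop atTop :=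
      tendsto_natCast_atTop_atTop.comp
        (tendsto_atTop_mono (fun k => le_max_left k d) tendsto_id)
    have t3 := (t1.comp t2).div_const (r-1)
    rw [zero_div] at t3
    refine t3.congr fun k => ?_
    simp [hH, Function.comp]
  have hGsum : HasSum G (H 0) := by
    rw [hasSum_iff_tendsto_nat_of_nonneg hGnonneg]
    have : ∀ n : ℕ, ∑ i ∈ Finset.range n, G i = H 0 - H n := by
      intro n; exact Finset.sum_range_sub' H n
    simp only [this]
    simpa using (tendsto_const_nhds.sub hH0)
  have hstrict : ∀ k, d ≤ k → F (k+1) < G k := by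
    intro k hk
    have hk1 : d < k + 1 := Nat.lt_succ_of_le hk
    have hmk : max k d = k := max_eq_left hk
    have hmk1 : max (k+1) d = k + 1 := max_eq_left (by omega)
    have ht : (2:ℝ) ≤ ((k:ℝ) + 1) := by
      have : 1 ≤ k := le_trans hd hk
      exact_mod_cast Nat.succ_le_succ this
    have hs := step_ineq' hr ht
    have hcast : (((k+1:ℕ)):ℝ) = (k:ℝ) + 1 := by push_cast; ring
    simp only [hF, hG, hH, hmk, hmk1, if_pos hk1, hcast]
    rw [div_sub_div_same, lt_div_iff₀ hrpos]
    have : ((k:ℝ) + 1 - 1) = (k:ℝ) := by ring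
    rw [this] at hs
    linarith
  have hle : ∀ k, F (k+1) ≤ G k := by
    intro k
    rcases le_or_gt d k with hk | hk
    · exact (hstrict k hk).le
    · have : ¬ d < k + 1 := by omega
      simp only [hF, if_neg this]
      exact hGnonneg k
  have hshift : ∑' k, F k = ∑' k, F (k+1) := by
    rw [Summable.tsum_eq_zero_add hFsum]
    simp [hF]
  have hmain : ∑' k, F (k+1) < H 0 := by
    rw [← hGsum.tsum_eq]
    exact Summable.tsum_lt_tsum_of_nonneg (fun b => hFnonneg _) hle (hstrict d le_rfl) hGsum.summable
  have hH0val : H 0 = (d:ℝ) ^ (1-r) / (r-1) := by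
    simp [hH, Nat.max_eq_right (Nat.zero_le d)]
  have hfinal : (d:ℝ) ^ (1-r) / (r-1) ≤ (d:ℝ) ^ (-r) := by
    have hdpos : (0:ℝ) < (d:ℝ) := by exact_mod_cast hd
    have hrw : (d:ℝ) ^ (1-r) = (d:ℝ) * (d:ℝ) ^ (-r) := by
      rw [show (1-r) = 1 + (-r) by ring, Real.rpow_add hdpos, Real.rpow_one]
    rw [hrw, div_le_iff₀ hrpos]
    have hnn : (0:ℝ) ≤ (d:ℝ) ^ (-r) := Real.rpow_nonneg hdpos.le _
    nlinarith
  rw [htail, hshift]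
  calc ∑' k, F (k+1) < H 0 := hmain
    _ = (d:ℝ) ^ (1-r) / (r-1) := hH0val
    _ ≤ (d:ℝ) ^ (-r) := hfinal

private lemma min_mismatch_primePow' {a b d : ℕ} (ha : a ≠ 0) (hb : b ≠ 0)
    (hd : d ∈ a.divisors \ b.divisors)
    (hmin : ∀ e, e ∈ a.divisors \ b.divisors → d ≤ e) :
    ∃ p k : ℕ, p.Prime ∧ 1 ≤ k ∧ p ^ k = d := by
  rw [Finset.mem_sdiff] at hd
  obtain ⟨hda, hdb⟩ := hd
  have hdvd : d ∣ a := (Nat.mem_divisors.mp hda).1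
  have hdm : ¬ d ∣ b := fun hc => hdb (Nat.mem_divisors.mpr ⟨hc, hb⟩)
  have hd0 : d ≠ 0 := (Nat.pos_of_mem_divisors hda).ne'
  have hd1 : d ≠ 1 := by rintro rfl; exact hdm (one_dvd b)
  set p := d.minFac with hp0
  have hp : p.Prime := Nat.minFac_prime hd1
  set k := d.factorization p with hk0
  have hk : 0 < k := hp.factorization_pos_of_dvd hd0 (Nat.minFac_dvd d)
  set x := p ^ k with hx0
  set y := d / x with hy0
  have hxd : x ∣ d := Nat.ordProj_dvd d p
  have hxy : x * y = d := Nat.ordProj_mul_ordCompl_eq_self d p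
  have hcop : Nat.Coprime x y := (Nat.coprime_ordCompl hp hd0).pow_left k
  by_cases hy1 : y = 1
  · refine ⟨p, k, hp, hk, ?_⟩
    rw [← hxy, hy1, mul_one]
  · exfalso
    have hy0' : y ≠ 0 := by
      intro hc; rw [hc, mul_zero] at hxy; exact hd0 hxy.symm
    have hx1 : 1 < x := Nat.one_lt_pow hk.ne' hp.one_lt
    have hxpos : 0 < x := by omega
    have hy2 : 1 < y := lt_of_le_of_ne (Nat.one_le_iff_ne_zero.mpr hy0') (Ne.symm hy1)
    have hxlt : x < d := by
      rw [← hxy]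
      exact (Nat.lt_mul_iff_one_lt_right hxpos).mpr hy2
    have hylt : y < d := by
      rw [← hxy]
      exact (Nat.lt_mul_iff_one_lt_left (by omega)).mpr hx1
    have hxa : x ∈ a.divisors := Nat.mem_divisors.mpr ⟨hxd.trans hdvd, ha⟩
    have hya : y ∈ a.divisors := Nat.mem_divisors.mpr
      ⟨(show y ∣ d from ⟨x, by rw [← hxy, mul_comm]⟩).trans hdvd, ha⟩
    have hxb : x ∣ b := by
      by_contra hc
      have : x ∈ a.divisors \ b.divisors :=
        Finset.mem_sdiff.mpr ⟨hxa, fun hm => hc (Nat.mem_divisors.mp hm).1⟩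
      exact absurd (hmin x this) (by omega)
    have hyb : y ∣ b := by
      by_contra hc
      have : y ∈ a.divisors \ b.divisors :=
        Finset.mem_sdiff.mpr ⟨hya, fun hm => hc (Nat.mem_divisors.mp hm).1⟩
      exact absurd (hmin y this) (by omega)
    exact hdm (hxy ▸ hcop.mul_dvd_of_dvd_of_dvd hxb hyb)

theorem statement12 (r : ℝ) (hr : 2 ≤ r) (n : ℕ) (hn : 0 < n)
    (h : ∀ p k : ℕ, p.Prime → 1 ≤ k → p ^ k ∣ n → ((p ^ k : ℕ) : ℝ) ≤ r - 1)
    (ε : ℝ)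
    (hε : ε = sInf {x : ℝ | ∃ d : ℕ, 0 < d ∧ (d : ℝ) ≤ r - 1 ∧
      x = (d : ℝ) ^ (-r) - ∑' m : {m : ℕ // d < m}, ((m : ℕ) : ℝ) ^ (-r)}) :
    0 < ε ∧ ∀ m : ℕ, 0 < m →
      sigmaNeg r n ≤ sigmaNeg r m ∨ sigmaNeg r m ≤ sigmaNeg r n - ε := by
  set tail : ℕ → ℝ := fun d => ∑' m : {m : ℕ // d < m}, ((m : ℕ) : ℝ) ^ (-r) with htaildef
  set S : Set ℝ := {x : ℝ | ∃ d : ℕ, 0 < d ∧ (d : ℝ) ≤ r - 1 ∧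
      x = (d : ℝ) ^ (-r) - tail d} with hSdef
  have hεS : ε = sInf S := hε
  -- finiteness of S
  have hSfin : S.Finite := by
    have hT : {d : ℕ | 0 < d ∧ (d:ℝ) ≤ r - 1}.Finite := by
      apply (Set.finite_Iic (Nat.floor (r-1))).subset
      intro d hd
      exact Set.mem_Iic.mpr (Nat.le_floor hd.2)
    have : S = (fun d : ℕ => (d:ℝ) ^ (-r) - tail d) '' {d : ℕ | 0 < d ∧ (d:ℝ) ≤ r - 1} := by
      ext x
      constructor
      · rintro ⟨d, hd1, hd2, hd3⟩; exact ⟨d, ⟨hd1, hd2⟩, hd3.symm⟩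
      · rintro ⟨d, ⟨hd1, hd2⟩, hd3⟩; exact ⟨d, hd1, hd2, hd3.symm⟩
    rw [this]
    exact hT.image _
  have hSne : S.Nonempty := by
    refine ⟨(1:ℝ) ^ (-r) - tail 1, 1, one_pos, ?_, by norm_num⟩
    norm_num; linarith
  have hεmem : ε ∈ S := hεS ▸ hSne.csInf_mem hSfin
  have hεpos : 0 < ε := by
    obtain ⟨d, hd1, hd2, hd3⟩ := hεmem
    rw [hd3]
    have := tail_lt' hr hd1 hd2
    rw [htaildef]
    simp only [htaildef] at this ⊢
    linarith
  have hεle : ∀ d : ℕ, 0 < d → (d:ℝ) ≤ r - 1 → ε ≤ (d:ℝ) ^ (-r) - tail d := by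
    intro d hd1 hd2
    rw [hεS]
    exact csInf_le hSfin.bddBelow ⟨d, hd1, hd2, rfl⟩
  refine ⟨hεpos, ?_⟩
  intro m hm
  have fnonneg : ∀ e : ℕ, (0:ℝ) ≤ (e:ℝ) ^ (-r) := fun e => Real.rpow_nonneg (Nat.cast_nonneg e) _
  set A := n.divisors with hA
  set B := m.divisors with hB
  -- sum over a finset of naturals all exceeding d is at most tail d
  have sumle_tail : ∀ (d : ℕ) (s : Finset ℕ), (∀ e ∈ s, d < e) →
      ∑ e ∈ s, (e:ℝ) ^ (-r) ≤ tail d := by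
    intro d s hs
    have hsum : Summable (fun m : {m : ℕ // d < m} => ((m : ℕ) : ℝ) ^ (-r)) :=
      (Real.summable_nat_rpow.mpr (by linarith : -r < -1)).subtype _
    have e1 : ∑ e ∈ s.subtype (fun e => d < e), ((e : ℕ):ℝ) ^ (-r) = ∑ e ∈ s, (e:ℝ) ^ (-r) := by
      rw [Finset.sum_subtype_eq_sum_filter (fun e : ℕ => (e:ℝ) ^ (-r)) (p := fun e => d < e),
        Finset.filter_true_of_mem hs]
    rw [← e1, htaildef]
    exact Summable.sum_le_tsum _ (fun i _ => fnonneg i) hsum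
  -- decomposition of the difference
  have hsplit : sigmaNeg r n - sigmaNeg r m
      = ∑ e ∈ A \ B, (e:ℝ) ^ (-r) - ∑ e ∈ B \ A, (e:ℝ) ^ (-r) := by
    have h1 : ∑ e ∈ A ∩ B, (e:ℝ) ^ (-r) + ∑ e ∈ A \ B, (e:ℝ) ^ (-r)
        = ∑ e ∈ A, (e:ℝ) ^ (-r) := Finset.sum_inter_add_sum_sdiff A B _
    have h2 : ∑ e ∈ B ∩ A, (e:ℝ) ^ (-r) + ∑ e ∈ B \ A, (e:ℝ) ^ (-r)
        = ∑ e ∈ B, (e:ℝ) ^ (-r) := Finset.sum_inter_add_sum_sdiff B A _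
    rw [Finset.inter_comm] at h2
    simp only [sigmaNeg, ← hA, ← hB]
    linarith
  by_cases hAB : A \ B = ∅
  · left
    have hsub : A ⊆ B := Finset.sdiff_eq_empty_iff_subset.mp hAB
    exact Finset.sum_le_sum_of_subset_of_nonneg hsub (fun i _ _ => fnonneg i)
  · have hne : (A \ B).Nonempty := Finset.nonempty_of_ne_empty hAB
    set d := (A \ B).min' hne with hddef
    have hdmem : d ∈ A \ B := Finset.min'_mem _ hne
    have hdmin : ∀ e, e ∈ A \ B → d ≤ e := fun e he => Finset.min'_le _ e he
    obtain ⟨p, k, hp, hk, hpk⟩ := min_mismatch_primePow' hn.ne' hm.ne' hdmem hdmin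
    have hdA : d ∈ A := (Finset.mem_sdiff.mp hdmem).1
    have hd0 : 0 < d := Nat.pos_of_mem_divisors hdA
    have hdr : (d:ℝ) ≤ r - 1 := by
      have := h p k hp hk (hpk ▸ (Nat.mem_divisors.mp hdA).1)
      rwa [hpk] at this
    by_cases hBA : ∀ e ∈ B \ A, d < e
    · right
      have h1 : ∑ e ∈ B \ A, (e:ℝ) ^ (-r) ≤ tail d := sumle_tail d _ hBA
      have h2 : (d:ℝ) ^ (-r) ≤ ∑ e ∈ A \ B, (e:ℝ) ^ (-r) :=
        Finset.single_le_sum (fun i _ => fnonneg i) hdmem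
      have h3 := hεle d hd0 hdr
      linarith
    · left
      push_neg at hBA
      obtain ⟨e, heBA, hed⟩ := hBA
      have heB : e ∈ B := (Finset.mem_sdiff.mp heBA).1
      have heA : e ∉ A := (Finset.mem_sdiff.mp heBA).2
      have hed' : e < d := lt_of_le_of_ne hed (fun hc => heA (hc ▸ hdA))
      have he0 : 0 < e := Nat.pos_of_mem_divisors heB
      have her : (e:ℝ) ≤ r - 1 := by
        have : (e:ℝ) + 1 ≤ (d:ℝ) := by exact_mod_cast hed'
        linarith
      have h1 : ∑ e' ∈ A \ B, (e':ℝ) ^ (-r) ≤ tail e := by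
        apply sumle_tail
        intro e' he'
        exact lt_of_lt_of_le hed' (hdmin e' he')
      have h2 : (e:ℝ) ^ (-r) ≤ ∑ e' ∈ B \ A, (e':ℝ) ^ (-r) :=
        Finset.single_le_sum (fun i _ => fnonneg i) heBA
      have h3 := hεle e he0 her
      linarith
end

section
/- Let r > 1 be a real number and let n be a squarefree positive integer all of whose prime factors are less than r − 1. Then σ_{-r}(n) is the right endpoint of a gap of cl(σ_{-r}(ℕ)): there exists ε > 0 such that the open interval (σ_{-r}(n) − ε, σ_{-r}(n)) is disjoint from cl(σ_{-r}(ℕ)), while σ_{-r}(n) ∈ cl(σ_{-r}(ℕ)). -/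
open scoped BigOperators

private lemma bern13 {r : ℝ} (hr : 1 < r) {x : ℝ} (hx : 1 < x) :
    (r - 1) * x ^ (-r) ≤ (x - 1) ^ (1 - r) - x ^ (1 - r) := by
  have hx0 : (0:ℝ) < x := by linarith
  have ha0 : (0:ℝ) < x - 1 := by linarith
  have ht0 : (0:ℝ) < (x - 1) / x := div_pos ha0 hx0
  have h1 : (x - 1) / x ≤ Real.exp (-(1/x)) := by
    have h := Real.add_one_le_exp (-(1/x))
    have h' : (x - 1) / x = -(1/x) + 1 := by field_simp; ring
    linarith
  have h2 : ((x - 1)/x) ^ (r - 1) ≤ Real.exp (-(1/x) * (r - 1)) := by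
    calc ((x - 1)/x) ^ (r - 1) ≤ Real.exp (-(1/x)) ^ (r - 1) :=
          Real.rpow_le_rpow ht0.le h1 (by linarith)
      _ = Real.exp (-(1/x) * (r - 1)) := (Real.exp_mul _ _).symm
  have h4 : 1 + (r - 1)/x ≤ Real.exp ((1/x) * (r - 1)) := by
    have h := Real.add_one_le_exp ((1/x) * (r - 1))
    have h' : (r - 1)/x = (1/x) * (r - 1) := by ring
    linarith
  have hkey : (1 + (r - 1)/x) * ((x - 1)/x) ^ (r - 1) ≤ 1 := by
    have hm := mul_le_mul h4 h2 (Real.rpow_nonneg ht0.le _) (Real.exp_pos _).le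
    rwa [← Real.exp_add, (by ring : (1/x) * (r - 1) + -(1/x) * (r - 1) = 0),
      Real.exp_zero] at hm
  have hk0 : (0:ℝ) < ((x - 1)/x) ^ (r - 1) := Real.rpow_pos_of_pos ht0 _
  have h5 : (((x - 1)/x) ^ (r - 1))⁻¹ * ((x - 1)/x) ^ (r - 1) = 1 :=
    inv_mul_cancel₀ hk0.ne'
  have hs0 : (0:ℝ) < (r - 1)/x := div_pos (by linarith) hx0
  have hinv : 1 + (r - 1)/x ≤ (((x - 1)/x) ^ (r - 1))⁻¹ := by
    nlinarith [hkey, hk0, h5]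
  have htpow : ((x - 1)/x) ^ (1 - r) = (((x - 1)/x) ^ (r - 1))⁻¹ := by
    rw [show (1 - r) = -(r - 1) by ring, Real.rpow_neg ht0.le]
  have hmul : (x - 1) ^ (1 - r) = x ^ (1 - r) * ((x - 1)/x) ^ (1 - r) := by
    rw [← Real.mul_rpow hx0.le ht0.le]
    congr 1
    field_simp
  have hxr : x ^ (-r) = x ^ (1 - r) * x⁻¹ := by
    rw [← Real.rpow_neg_one x, ← Real.rpow_add hx0]
    congr 1
    ring
  have hxp : (0:ℝ) < x ^ (1 - r) := Real.rpow_pos_of_pos hx0 _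
  have hfin : x ^ (1 - r) * (1 + (r - 1)/x) ≤ x ^ (1 - r) * ((x - 1)/x) ^ (1 - r) := by
    rw [htpow]
    exact mul_le_mul_of_nonneg_left hinv hxp.le
  rw [hmul, hxr]
  have hrw : x ^ (1 - r) * ((r - 1)/x) = (r - 1) * (x ^ (1 - r) * x⁻¹) := by
    field_simp
  nlinarith [hfin, hrw]

private lemma tail13 {r : ℝ} (hr : 1 < r) {e : ℕ} (he : 1 ≤ e) (M : ℕ) :
    ∑ d ∈ Finset.Ioc e M, (d : ℝ) ^ (-r) ≤ (e : ℝ) ^ (1 - r) / (r - 1) := by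
  have hr0 : (0:ℝ) < r - 1 := by linarith
  have key : ∀ M, e ≤ M →
      ∑ d ∈ Finset.Ioc e M, (d : ℝ) ^ (-r) + (M : ℝ) ^ (1 - r) / (r - 1)
        ≤ (e : ℝ) ^ (1 - r) / (r - 1) := by
    intro M
    induction M with
    | zero => intro h0; omega
    | succ M ih =>
      intro hM
      rcases Nat.lt_or_ge M e with hlt | hge
      · have heq : e = M + 1 := by omega
        subst heq
        rw [Finset.Ioc_self, Finset.sum_empty]
        linarith
      · have hM1 : (1:ℝ) ≤ (M:ℝ) := by exact_mod_cast he.trans hge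
        have hstep := bern13 hr (x := ((M:ℝ) + 1)) (by linarith)
        have h2 : ((M:ℝ) + 1 - 1) = (M:ℝ) := by ring
        rw [h2] at hstep
        rw [Finset.sum_Ioc_succ_top hge]
        push_cast
        have h1 : ((M:ℝ) + 1) ^ (-r) ≤ ((M:ℝ) ^ (1 - r) - ((M:ℝ) + 1) ^ (1 - r)) / (r - 1) := by
          rw [le_div_iff₀ hr0]
          nlinarith [hstep]
        have hsplit : ((M:ℝ) ^ (1 - r) - ((M:ℝ) + 1) ^ (1 - r)) / (r - 1)
            = (M:ℝ) ^ (1 - r) / (r - 1) - ((M:ℝ) + 1) ^ (1 - r) / (r - 1) := by ring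
        have ihM := ih hge
        linarith
  rcases Nat.lt_or_ge M e with hlt | hge
  · rw [Finset.Ioc_eq_empty (by omega), Finset.sum_empty]
    positivity
  · have hk := key M hge
    have hpos : 0 ≤ (M : ℝ) ^ (1 - r) / (r - 1) := by positivity
    linarith

theorem statement13 (r : ℝ) (hr : 1 < r) (n : ℕ) (hn : 0 < n)
    (hsq : Squarefree n) (h : ∀ p : ℕ, p.Prime → p ∣ n → (p : ℝ) < r - 1) :
    sigmaNeg r n ∈ sigmaClosure r ∧
      ∃ ε > 0, Set.Ioo (sigmaNeg r n - ε) (sigmaNeg r n) ∩ sigmaClosure r = ∅ := by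
  have hr0 : (0:ℝ) < r - 1 := by linarith
  have hg0 : ∀ d : ℕ, 0 ≤ (d : ℝ) ^ (-r) := fun d => Real.rpow_nonneg (Nat.cast_nonneg d) _
  constructor
  · exact subset_closure ⟨⟨n, hn⟩, rfl⟩
  -- the gap
  classical
  set E : Finset ℕ := (Finset.range (⌈r⌉₊ + 1)).filter (fun e : ℕ => 2 ≤ e ∧ (e:ℝ) < r - 1) with hE
  set δ : ℕ → ℝ := fun e => (e:ℝ) ^ (-r) - (e:ℝ) ^ (1 - r) / (r - 1) with hδ
  have hδpos : ∀ e : ℕ, 1 ≤ e → (e:ℝ) < r - 1 → 0 < δ e := by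
    intro e he her
    have he0 : (0:ℝ) < (e:ℝ) := by exact_mod_cast he
    have h1 : (e:ℝ) ^ (1 - r) = (e:ℝ) ^ (-r) * (e:ℝ) := by
      rw [show (1 - r) = (-r) + 1 by ring, Real.rpow_add he0, Real.rpow_one]
    have h2 : (0:ℝ) < (e:ℝ) ^ (-r) := Real.rpow_pos_of_pos he0 _
    have h3 : (e:ℝ) / (r - 1) < 1 := (div_lt_one hr0).2 her
    have : δ e = (e:ℝ) ^ (-r) * (1 - (e:ℝ) / (r - 1)) := by
      simp only [hδ]; rw [h1]; field_simp
    rw [this]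
    exact mul_pos h2 (by linarith)
  set F : Finset ℝ := insert (1:ℝ) (E.image δ) with hF
  have hFne : F.Nonempty := ⟨1, Finset.mem_insert_self _ _⟩
  set ε := F.min' hFne with hεdef
  have hεpos : 0 < ε := by
    apply (Finset.lt_min'_iff F hFne).2
    intro y hy
    rcases Finset.mem_insert.1 hy with rfl | hy
    · norm_num
    · obtain ⟨e, heE, rfl⟩ := Finset.mem_image.1 hy
      obtain ⟨_, he2, her⟩ := Finset.mem_filter.1 heE
      exact hδpos e (by omega) her
  have hεle : ∀ e : ℕ, 2 ≤ e → (e:ℝ) < r - 1 → ε ≤ δ e := by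
    intro e he2 her
    apply Finset.min'_le
    apply Finset.mem_insert_of_mem
    apply Finset.mem_image_of_mem
    refine Finset.mem_filter.2 ⟨Finset.mem_range.2 ?_, he2, her⟩
    have h1 : (e:ℝ) < r := by linarith
    have h2 : (e:ℝ) < (⌈r⌉₊ : ℝ) + 1 := lt_of_lt_of_le h1 (by linarith [Nat.le_ceil r])
    exact_mod_cast h2
  refine ⟨ε, hεpos, ?_⟩
  -- main claim : no value of σ_{-r} lies in the window
  have hmain : ∀ m : ℕ, 0 < m →
      sigmaNeg r m ∉ Set.Ioo (sigmaNeg r n - ε) (sigmaNeg r n) := by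
    intro m hm hmem
    obtain ⟨hlow, hupp⟩ := hmem
    have hn0 : n ≠ 0 := hn.ne'
    have hm0 : m ≠ 0 := hm.ne'
    set Dn := n.divisors with hDn
    set Dm := m.divisors with hDm
    have hsum_n : sigmaNeg r n
        = ∑ d ∈ Dn ∩ Dm, (d:ℝ)^(-r) + ∑ d ∈ Dn \ Dm, (d:ℝ)^(-r) :=
      (Finset.sum_inter_add_sum_sdiff Dn Dm _).symm
    have hsum_m : sigmaNeg r m
        = ∑ d ∈ Dn ∩ Dm, (d:ℝ)^(-r) + ∑ d ∈ Dm \ Dn, (d:ℝ)^(-r) := by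
      rw [Finset.inter_comm]
      exact (Finset.sum_inter_add_sum_sdiff Dm Dn _).symm
    set A := Dn.filter (fun d : ℕ => 2 ≤ d ∧ (d:ℝ) < r - 1) with hA
    set B := Dm.filter (fun d : ℕ => 2 ≤ d ∧ (d:ℝ) < r - 1) with hB
    by_cases hAB : A ⊆ B
    · -- then n ∣ m, so σ(n) ≤ σ(m): contradiction with hupp
      have hdvd : n ∣ m := by
        have h1 : ∀ p ∈ n.primeFactors, p ∣ m := by
          intro p hp
          have hpp : p.Prime := Nat.prime_of_mem_primeFactors hp
          have hpn : p ∣ n := Nat.dvd_of_mem_primeFactors hp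
          have hpA : p ∈ A := Finset.mem_filter.2
            ⟨Nat.mem_divisors.2 ⟨hpn, hn0⟩, hpp.two_le, h p hpp hpn⟩
          exact (Nat.mem_divisors.1 (Finset.mem_filter.1 (hAB hpA)).1).1
        calc n = ∏ p ∈ n.primeFactors, p := (Nat.prod_primeFactors_of_squarefree hsq).symm
        _ ∣ m := Finset.prod_primes_dvd m
            (fun p hp => (Nat.prime_of_mem_primeFactors hp).prime) h1
      have : sigmaNeg r n ≤ sigmaNeg r m :=
        Finset.sum_le_sum_of_subset_of_nonneg
          (Nat.divisors_subset_of_dvd hm0 hdvd) (fun i _ _ => hg0 i)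
      linarith
    · have hSne : ((A \ B) ∪ (B \ A)).Nonempty := by
        obtain ⟨a, haA, haB⟩ := Finset.not_subset.1 hAB
        exact ⟨a, Finset.mem_union_left _ (Finset.mem_sdiff.2 ⟨haA, haB⟩)⟩
      set S := (A \ B) ∪ (B \ A) with hS
      set e := S.min' hSne with he
      have heS : e ∈ S := S.min'_mem hSne
      have heP : 2 ≤ e ∧ (e:ℝ) < r - 1 := by
        rcases Finset.mem_union.1 heS with h' | h'
        · exact (Finset.mem_filter.1 (Finset.mem_sdiff.1 h').1).2
        · exact (Finset.mem_filter.1 (Finset.mem_sdiff.1 h').1).2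
      have hεδ : ε ≤ δ e := hεle e heP.1 heP.2
      have htail : ∀ M : ℕ, ∑ d ∈ Finset.Ioc e M, (d:ℝ)^(-r) ≤ (e:ℝ)^(1-r)/(r-1) :=
        fun M => tail13 hr (by omega) M
      rcases Finset.mem_union.1 heS with hcase | hcase
      · -- e ∣ n, e ∤ m : σ(m) ≤ σ(n) - δ e ≤ σ(n) - ε, contradiction with hlow
        obtain ⟨heA, heB⟩ := Finset.mem_sdiff.1 hcase
        have heDn : e ∈ Dn := (Finset.mem_filter.1 heA).1
        have heDm : e ∉ Dm := fun hmem => heB (Finset.mem_filter.2 ⟨hmem, heP⟩)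
        have h1 : (e:ℝ)^(-r) ≤ ∑ d ∈ Dn \ Dm, (d:ℝ)^(-r) :=
          Finset.single_le_sum (fun i _ => hg0 i) (Finset.mem_sdiff.2 ⟨heDn, heDm⟩)
        have hsub : Dm \ Dn ⊆ Finset.Ioc e m := by
          intro d hd
          obtain ⟨hdDm, hdDn⟩ := Finset.mem_sdiff.1 hd
          refine Finset.mem_Ioc.2 ⟨?_, Nat.divisor_le hdDm⟩
          have hd1 : d ≠ 1 := fun hd1 => hdDn (by
            rw [hd1, hDn]; exact Nat.one_mem_divisors.2 hn0)
          have hd2 : 2 ≤ d := by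
            have := Nat.pos_of_mem_divisors hdDm; omega
          by_cases hdr : (d:ℝ) < r - 1
          · have hdB : d ∈ B := Finset.mem_filter.2 ⟨hdDm, hd2, hdr⟩
            have hdA : d ∉ A := fun hdA => hdDn (Finset.mem_filter.1 hdA).1
            have hdS : d ∈ S := Finset.mem_union_right _ (Finset.mem_sdiff.2 ⟨hdB, hdA⟩)
            have : e ≤ d := Finset.min'_le _ _ hdS
            have hne : e ≠ d := fun hed => heDm (hed ▸ hdDm)
            omega
          · have : (e:ℝ) < (d:ℝ) := lt_of_lt_of_le heP.2 (not_lt.1 hdr)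
            exact_mod_cast this
        have h2 : ∑ d ∈ Dm \ Dn, (d:ℝ)^(-r) ≤ ∑ d ∈ Finset.Ioc e m, (d:ℝ)^(-r) :=
          Finset.sum_le_sum_of_subset_of_nonneg hsub (fun i _ _ => hg0 i)
        have h3 := htail m
        have hδe : δ e = (e:ℝ)^(-r) - (e:ℝ)^(1-r)/(r-1) := rfl
        -- σ(n) - σ(m) ≥ g e - tail ≥ δ e ≥ ε
        have : sigmaNeg r m ≤ sigmaNeg r n - δ e := by
          rw [hsum_n, hsum_m, hδe]; linarith
        linarith
      · -- e ∣ m, e ∤ n : σ(m) ≥ σ(n) + δ e > σ(n), contradiction with hupp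
        obtain ⟨heB, heA⟩ := Finset.mem_sdiff.1 hcase
        have heDm : e ∈ Dm := (Finset.mem_filter.1 heB).1
        have heDn : e ∉ Dn := fun hmem => heA (Finset.mem_filter.2 ⟨hmem, heP⟩)
        have h1 : (e:ℝ)^(-r) ≤ ∑ d ∈ Dm \ Dn, (d:ℝ)^(-r) :=
          Finset.single_le_sum (fun i _ => hg0 i) (Finset.mem_sdiff.2 ⟨heDm, heDn⟩)
        have hsub : Dn \ Dm ⊆ Finset.Ioc e n := by
          intro d hd
          obtain ⟨hdDn, hdDm⟩ := Finset.mem_sdiff.1 hd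
          refine Finset.mem_Ioc.2 ⟨?_, Nat.divisor_le hdDn⟩
          have hd1 : d ≠ 1 := fun hd1 => hdDm (by
            rw [hd1, hDm]; exact Nat.one_mem_divisors.2 hm0)
          have hd2 : 2 ≤ d := by
            have := Nat.pos_of_mem_divisors hdDn; omega
          by_cases hdr : (d:ℝ) < r - 1
          · have hdA : d ∈ A := Finset.mem_filter.2 ⟨hdDn, hd2, hdr⟩
            have hdB : d ∉ B := fun hdB => hdDm (Finset.mem_filter.1 hdB).1
            have hdS : d ∈ S := Finset.mem_union_left _ (Finset.mem_sdiff.2 ⟨hdA, hdB⟩)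
            have : e ≤ d := Finset.min'_le _ _ hdS
            have hne : e ≠ d := fun hed => heDn (hed ▸ hdDn)
            omega
          · have : (e:ℝ) < (d:ℝ) := lt_of_lt_of_le heP.2 (not_lt.1 hdr)
            exact_mod_cast this
        have h2 : ∑ d ∈ Dn \ Dm, (d:ℝ)^(-r) ≤ ∑ d ∈ Finset.Ioc e n, (d:ℝ)^(-r) :=
          Finset.sum_le_sum_of_subset_of_nonneg hsub (fun i _ _ => hg0 i)
        have h3 := htail n
        have hδe : δ e = (e:ℝ)^(-r) - (e:ℝ)^(1-r)/(r-1) := rfl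
        have hδe0 : 0 < δ e := hδpos e (by omega) heP.2
        have : sigmaNeg r n + δ e ≤ sigmaNeg r m := by
          rw [hsum_n, hsum_m, hδe]; linarith
        linarith
  -- conclude for the closure
  rw [Set.eq_empty_iff_forall_notMem]
  rintro x ⟨hx1, hx2⟩
  have hclosed : sigmaClosure r ⊆ (Set.Ioo (sigmaNeg r n - ε) (sigmaNeg r n))ᶜ := by
    apply closure_minimal
    · rintro y ⟨m, rfl⟩
      exact hmain m m.2
    · exact isOpen_Ioo.isClosed_compl
  exact hclosed hx2 hx1
end

section
/- Let r > 1 be a real number and suppose (x, y) is a gap of cl(σ_{-r}(ℕ)). Then y ∈ σ_{-r}(ℕ); that is, there exists a positive integer b with σ_{-r}(b) = y. -/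
open scoped BigOperators

lemma sigmaNeg_nonneg (r : ℝ) (n : ℕ) : 0 ≤ sigmaNeg r n :=
  Finset.sum_nonneg fun d _ => Real.rpow_nonneg (Nat.cast_nonneg d) _

lemma one_le_sigmaNeg (r : ℝ) {n : ℕ} (hn : n ≠ 0) : 1 ≤ sigmaNeg r n := by
  have h1 : (1:ℕ) ∈ n.divisors := Nat.one_mem_divisors.mpr hn
  have := Finset.single_le_sum (f := fun d : ℕ => (d:ℝ) ^ (-r))
    (fun d _ => Real.rpow_nonneg (Nat.cast_nonneg d) _) h1
  simpa [sigmaNeg] using this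

lemma sigmaNeg_one (r : ℝ) : sigmaNeg r 1 = 1 := by
  simp [sigmaNeg]

lemma sigmaNeg_mono (r : ℝ) {m n : ℕ} (h : m ∣ n) (hn : n ≠ 0) :
    sigmaNeg r m ≤ sigmaNeg r n :=
  Finset.sum_le_sum_of_subset_of_nonneg (Nat.divisors_subset_of_dvd hn h)
    (fun d _ _ => Real.rpow_nonneg (Nat.cast_nonneg d) _)

noncomputable def gfun (r : ℝ) : ArithmeticFunction ℝ :=
  ⟨fun n => if n = 0 then 0 else (n : ℝ) ^ (-r), by simp⟩

lemma gfun_mult (r : ℝ) : (gfun r).IsMultiplicative := by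
  constructor
  · simp [gfun]
  · intro m n _
    rcases eq_or_ne m 0 with rfl | hm
    · simp [gfun]
    rcases eq_or_ne n 0 with rfl | hn
    · simp [gfun]
    simp only [gfun, ArithmeticFunction.coe_mk, Nat.cast_mul, mul_eq_zero, hm, hn, if_false,
      or_self]
    exact Real.mul_rpow (Nat.cast_nonneg m) (Nat.cast_nonneg n)

lemma sigmaNeg_eq (r : ℝ) (n : ℕ) :
    sigmaNeg r n = ((ArithmeticFunction.zeta : ArithmeticFunction ℕ) * gfun r) n := by
  rw [ArithmeticFunction.coe_zeta_mul_apply]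
  refine Finset.sum_congr rfl fun d hd => ?_
  simp [gfun, (Nat.pos_of_mem_divisors hd).ne']

lemma sigmaNeg_mult (r : ℝ) {m n : ℕ} (h : m.Coprime n) :
    sigmaNeg r (m * n) = sigmaNeg r m * sigmaNeg r n := by
  rw [sigmaNeg_eq, sigmaNeg_eq, sigmaNeg_eq]
  exact (ArithmeticFunction.isMultiplicative_zeta.natCast.mul (gfun_mult r)).map_mul_of_coprime h

lemma sigmaNeg_prime_pow (r : ℝ) {p : ℕ} (hp : p.Prime) (k : ℕ) :
    sigmaNeg r (p ^ k) = ∑ j ∈ Finset.range (k + 1), ((p:ℝ) ^ (-r)) ^ j := by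
  rw [sigmaNeg, Nat.divisors_prime_pow hp, Finset.sum_map]
  refine Finset.sum_congr rfl fun j _ => ?_
  simp only [Function.Embedding.coeFn_mk, Nat.cast_pow]
  rw [← Real.rpow_natCast ((p:ℝ) ^ (-r)) j, ← Real.rpow_natCast (p:ℝ) j,
    ← Real.rpow_mul (Nat.cast_nonneg p), ← Real.rpow_mul (Nat.cast_nonneg p), mul_comm]

lemma chain_lemma (r c y : ℝ) (hy : 1 < y) :
    ∀ s : ℕ, s ≠ 0 → (∀ d, d ∣ s → sigmaNeg r d ≤ c ∨ y ≤ sigmaNeg r d) →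
    y ≤ sigmaNeg r s →
    ∃ m p, p.Prime ∧ m ≠ 0 ∧ m * p ∣ s ∧ sigmaNeg r m ≤ c ∧ y ≤ sigmaNeg r (m * p) := by
  intro s
  induction s using Nat.strong_induction_on with
  | _ s IH =>
    intro hs0 hd hys
    have hs1 : s ≠ 1 := by
      rintro rfl; rw [sigmaNeg_one] at hys; linarith
    obtain ⟨p, hp, hps⟩ := Nat.exists_prime_and_dvd hs1
    set s₂ := s / p with hs₂
    have hmul : s₂ * p = s := Nat.div_mul_cancel hps
    have hs₂0 : s₂ ≠ 0 := by
      intro h; rw [h, zero_mul] at hmul; exact hs0 hmul.symm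
    have hs₂lt : s₂ < s := Nat.div_lt_self (Nat.pos_of_ne_zero hs0) hp.one_lt
    have hs₂dvd : s₂ ∣ s := ⟨p, hmul.symm ▸ rfl⟩
    rcases hd s₂ hs₂dvd with h1 | h1
    · exact ⟨s₂, p, hp, hs₂0, hmul ▸ dvd_refl s, h1, hmul ▸ hys⟩
    · obtain ⟨m, q, hq, hm0, hdvd, hc, hyc⟩ :=
        IH s₂ hs₂lt hs₂0 (fun d hds => hd d (hds.trans hs₂dvd)) h1
      exact ⟨m, q, hq, hm0, hdvd.trans hs₂dvd, hc, hyc⟩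

lemma sigmaNeg_factor (r : ℝ) {p m : ℕ} (hp : p.Prime) (hm : m ≠ 0) :
    ∃ a t : ℕ, t ≠ 0 ∧ t ∣ m ∧ ¬ p ∣ t ∧ m = p ^ a * t ∧
      sigmaNeg r m = (∑ j ∈ Finset.range (a + 1), ((p:ℝ) ^ (-r)) ^ j) * sigmaNeg r t ∧
      sigmaNeg r (m * p) =
        (∑ j ∈ Finset.range (a + 2), ((p:ℝ) ^ (-r)) ^ j) * sigmaNeg r t := by
  set a := m.factorization p with ha
  set t := m / p ^ a with ht
  have hfac : p ^ a * t = m := Nat.ordProj_mul_ordCompl_eq_self m p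
  have htdvd : t ∣ m := Nat.div_dvd_of_dvd (Nat.ordProj_dvd m p)
  have ht0 : t ≠ 0 := by
    intro h; rw [h, mul_zero] at hfac; exact hm hfac.symm
  have hpt : ¬ p ∣ t := Nat.not_dvd_ordCompl hp hm
  have hcop : ∀ k : ℕ, (p ^ k).Coprime t :=
    fun k => Nat.Coprime.pow_left k ((Nat.Prime.coprime_iff_not_dvd hp).mpr hpt)
  refine ⟨a, t, ht0, htdvd, hpt, hfac.symm, ?_, ?_⟩
  · rw [← hfac, sigmaNeg_mult r (hcop a), sigmaNeg_prime_pow r hp]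
  · have : m * p = p ^ (a + 1) * t := by rw [← hfac]; ring
    rw [this, sigmaNeg_mult r (hcop (a+1)), sigmaNeg_prime_pow r hp]

lemma main_lemma (r ρ Y : ℝ) (hr : 1 < r) (hρ : 1 < ρ) (hY : 1 ≤ Y) :
    ∀ n : ℕ, ∀ (Q : Set ℕ) (y : ℝ), 1 ≤ y → y ≤ Y →
      y ≤ (1 + (1 - 1/ρ) / (Y + 1)) ^ n →
      (∀ ε : ℝ, 0 < ε → ∃ s : ℕ, (0 < s ∧ ∀ p, p.Prime → p ∣ s → p ∈ Q) ∧
        y ≤ sigmaNeg r s ∧ sigmaNeg r s < y + ε) →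
      (∀ s : ℕ, 0 < s → (∀ p, p.Prime → p ∣ s → p ∈ Q) →
        sigmaNeg r s ≤ y / ρ ∨ y ≤ sigmaNeg r s) →
      ∃ b : ℕ, (0 < b ∧ ∀ p, p.Prime → p ∣ b → p ∈ Q) ∧ sigmaNeg r b = y := by
  have hδ : 0 < 1 - 1/ρ := by
    have : 1/ρ < 1 := by rw [div_lt_one (by linarith)]; linarith
    linarith
  have hY1 : (0:ℝ) < Y + 1 := by linarith
  set η : ℝ := (1 - 1/ρ) / (Y + 1) with hη_def
  have hη : 0 < η := div_pos hδ hY1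
  have hbound : ∀ z : ℝ, 0 < z → η ≤ z⁻¹ → z ≤ 1/η := by
    intro z hz hle
    rw [le_div_iff₀ hη]
    have h2 := mul_le_mul_of_nonneg_right hle hz.le
    rw [inv_mul_cancel₀ hz.ne'] at h2
    nlinarith
  intro n
  induction n with
  | zero =>
    intro Q y h1y _ hpow _ _
    have hy1 : y = 1 := le_antisymm (by simpa using hpow) h1y
    subst hy1
    exact ⟨1, ⟨one_pos, fun p hp hdvd => absurd (Nat.dvd_one.mp hdvd) hp.ne_one⟩, sigmaNeg_one r⟩
  | succ n IH =>
    intro Q y h1y hyY hpow happrox hgap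
    by_cases hatt : ∃ b : ℕ, (0 < b ∧ ∀ p, p.Prime → p ∣ b → p ∈ Q) ∧ sigmaNeg r b = y
    · exact hatt
    push_neg at hatt
    rcases eq_or_lt_of_le h1y with heq | h1y'
    · exact ⟨1, ⟨one_pos, fun p hp hdvd => absurd (Nat.dvd_one.mp hdvd) hp.ne_one⟩,
        by rw [sigmaNeg_one]; exact heq⟩
    -- 1 < y
    set N := ⌊1/η⌋₊ with hN_def
    have key : ∀ k : ℕ, ∃ pa : ℕ × ℕ, ∃ t : ℕ,
        pa.1.Prime ∧ pa.1 ∈ Q ∧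
        (0 < t ∧ (∀ q, q.Prime → q ∣ t → q ∈ Q) ∧ ¬ pa.1 ∣ t) ∧
        y ≤ (∑ j ∈ Finset.range (pa.2+2), ((pa.1:ℝ)^(-r))^j) * sigmaNeg r t ∧
        (∑ j ∈ Finset.range (pa.2+2), ((pa.1:ℝ)^(-r))^j) * sigmaNeg r t < y + 1/(k+1) ∧
        η ≤ ((pa.1:ℝ)^(-r))^(pa.2+1) ∧
        pa.1 < N+1 ∧ pa.2 < N+1 := by
      intro k
      have hεk : (0:ℝ) < 1/(k+1) := by positivity
      obtain ⟨s, ⟨hs0, hsQ⟩, hys, hsy⟩ := happrox _ hεk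
      have hd : ∀ d, d ∣ s → sigmaNeg r d ≤ y/ρ ∨ y ≤ sigmaNeg r d := fun d hds =>
        hgap d (Nat.pos_of_dvd_of_pos hds hs0) (fun q hq hqd => hsQ q hq (hqd.trans hds))
      obtain ⟨m, p, hp, hm0, hmps, hmc, hymp⟩ :=
        chain_lemma r (y/ρ) y h1y' s hs0.ne' hd hys
      obtain ⟨a, t, ht0, htm, hpt, hmeq, hσm, hσmp⟩ := sigmaNeg_factor r hp hm0
      set x : ℝ := (p:ℝ)^(-r) with hx_def
      have hx0 : 0 ≤ x := Real.rpow_nonneg (Nat.cast_nonneg p) _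
      have hpQ : p ∈ Q := hsQ p hp ((dvd_mul_left p m).trans hmps)
      have hts : t ∣ s := (htm.trans (Dvd.intro p rfl)).trans hmps
      have hσt1 : 1 ≤ sigmaNeg r t := one_le_sigmaNeg r ht0
      have hmp_le : sigmaNeg r (m*p) ≤ sigmaNeg r s := sigmaNeg_mono r hmps hs0.ne'
      have hk1 : 1/((k:ℝ)+1) ≤ 1 := by
        rw [div_le_one (by positivity)]; linarith [Nat.cast_nonneg (α := ℝ) k]
      have hσtY : sigmaNeg r t ≤ Y + 1 := by
        have := sigmaNeg_mono r hts hs0.ne'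
        linarith
      have hdiff : (∑ j ∈ Finset.range (a+2), x^j) =
          (∑ j ∈ Finset.range (a+1), x^j) + x^(a+1) := by
        rw [Finset.sum_range_succ]
      have hxa : η ≤ x^(a+1) := by
        have h1 : y - y/ρ ≤ x^(a+1) * sigmaNeg r t := by
          have : sigmaNeg r (m*p) - sigmaNeg r m = x^(a+1) * sigmaNeg r t := by
            rw [hσm, hσmp, hdiff]; ring
          linarith
        have h2 : 1 - 1/ρ ≤ y - y/ρ := by
          have : y - y/ρ = y * (1 - 1/ρ) := by ring
          nlinarith
        have hxp : 0 ≤ x^(a+1) := pow_nonneg hx0 _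
        rw [hη_def, div_le_iff₀ hY1]
        nlinarith
      have hp2 : (2:ℝ) ≤ (p:ℕ) := by exact_mod_cast hp.two_le
      have hp0 : (0:ℝ) < (p:ℕ) := by linarith
      have hx_le : x ≤ ((p:ℝ))⁻¹ := by
        have := Real.rpow_le_rpow_of_exponent_le (by linarith : (1:ℝ) ≤ (p:ℝ))
          (by linarith : -r ≤ -1)
        rwa [Real.rpow_neg_one] at this
      have hxhalf : x ≤ 2⁻¹ := by
        refine hx_le.trans ?_
        rw [inv_le_inv₀ hp0 (by norm_num)]
        exact hp2
      have hηx : η ≤ x := by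
        refine hxa.trans ?_
        calc x^(a+1) ≤ x^1 := pow_le_pow_of_le_one hx0 (by linarith) (by omega)
        _ = x := pow_one x
      have hpN : p < N + 1 :=
        Nat.lt_succ_of_le (Nat.le_floor (hbound _ hp0 (hηx.trans hx_le)))
      have haN : a < N + 1 := by
        refine Nat.lt_succ_of_le (Nat.le_floor ?_)
        have h2a : η ≤ ((2:ℝ)^(a+1))⁻¹ := by
          rw [← inv_pow]
          exact hxa.trans (pow_le_pow_left₀ hx0 hxhalf _)
        have h3 := hbound _ (by positivity) h2a
        have h4 : (a:ℝ) ≤ (2:ℝ)^(a+1) := by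
          have := Nat.lt_two_pow_self (n := a+1)
          have : ((a:ℝ)+1) ≤ (2:ℝ)^(a+1) := by exact_mod_cast this.le.trans (le_refl _)
          linarith
        linarith
      refine ⟨(p, a), t, hp, hpQ,
        ⟨Nat.pos_of_ne_zero ht0, fun q hq hqt => hsQ q hq (hqt.trans hts), hpt⟩,
        ?_, ?_, hxa, hpN, haN⟩
      · rw [← hσmp]; exact hymp
      · rw [← hσmp]; linarith
    -- choice and pigeonhole
    choose PA T hprime hPQ hTQ hge hlt hxa hpN haN using key
    set G : ℕ → Fin (N+1) × Fin (N+1) :=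
      fun k => (⟨(PA k).1, hpN k⟩, ⟨(PA k).2, haN k⟩) with hG_def
    obtain ⟨v, hv⟩ := Finite.exists_infinite_fiber G
    have hfib : {k | G k = v}.Infinite := Set.infinite_coe_iff.mp hv
    set p := (v.1 : ℕ) with hp_def
    set a := (v.2 : ℕ) with ha_def
    have hmem : ∀ k, k ∈ {k | G k = v} → (PA k).1 = p ∧ (PA k).2 = a := by
      intro k hk
      have hk' : G k = v := hk
      have h1 := congrArg (fun w : Fin (N+1) × Fin (N+1) => (w.1 : ℕ)) hk'
      have h2 := congrArg (fun w : Fin (N+1) × Fin (N+1) => (w.2 : ℕ)) hk'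
      simp only [hG_def] at h1 h2
      exact ⟨h1, h2⟩
    obtain ⟨k₀, hk₀⟩ := hfib.nonempty
    have hpprime : p.Prime := (hmem k₀ hk₀).1 ▸ hprime k₀
    have hpQ : p ∈ Q := (hmem k₀ hk₀).1 ▸ hPQ k₀
    set f : ℝ := ∑ j ∈ Finset.range (a+2), ((p:ℝ)^(-r))^j with hf_def
    have hf_lb : 1 + η ≤ f := by
      have h1 : η ≤ ((p:ℝ)^(-r))^(a+1) := by
        have := hxa k₀
        rw [(hmem k₀ hk₀).1, (hmem k₀ hk₀).2] at this
        exact this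
      have h2 : 1 + ((p:ℝ)^(-r))^(a+1) ≤ f := by
        rw [hf_def]
        have hsub : ({0, a+1} : Finset ℕ) ⊆ Finset.range (a+2) := by
          intro j hj
          simp only [Finset.mem_insert, Finset.mem_singleton] at hj
          rcases hj with rfl | rfl <;> simp [Finset.mem_range] <;> omega
        have := Finset.sum_le_sum_of_subset_of_nonneg
          (f := fun j => ((p:ℝ)^(-r))^j) hsub
          (fun j _ _ => pow_nonneg (Real.rpow_nonneg (Nat.cast_nonneg p) _) j)
        rwa [Finset.sum_pair (by omega : (0:ℕ) ≠ a+1), pow_zero] at this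
      linarith
    have hf0 : 0 < f := by linarith
    have hf1 : 1 ≤ f := by linarith
    set y' : ℝ := y / f with hy'_def
    -- approximation property for y'
    have happrox' : ∀ ε : ℝ, 0 < ε → ∃ t : ℕ,
        (0 < t ∧ ∀ q, q.Prime → q ∣ t → q ∈ Q \ {p}) ∧
        y' ≤ sigmaNeg r t ∧ sigmaNeg r t < y' + ε := by
      intro ε hε
      obtain ⟨k, hk, hklt⟩ := hfib.exists_gt ⌈1/ε⌉₊
      have hkε : 1/((k:ℝ)+1) < ε := by
        have h1 : 1/ε ≤ (⌈1/ε⌉₊ : ℝ) := Nat.le_ceil _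
        have h2 : ((⌈1/ε⌉₊ : ℕ) : ℝ) < (k:ℝ) := by exact_mod_cast hklt
        rw [div_lt_iff₀ (by positivity)]
        rw [div_le_iff₀ hε] at h1
        nlinarith
      obtain ⟨hP1, hP2⟩ := hmem k hk
      have hge' := hge k; rw [hP1, hP2] at hge'
      have hlt' := hlt k; rw [hP1, hP2] at hlt'
      have hT := hTQ k; rw [hP1] at hT
      obtain ⟨ht0, htQ, hpt⟩ := hT
      refine ⟨T k, ⟨ht0, fun q hq hqt => ⟨htQ q hq hqt, fun hqp => hpt (by
        simp only [Set.mem_singleton_iff] at hqp; exact hqp ▸ hqt)⟩⟩, ?_, ?_⟩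
      · rw [hy'_def, div_le_iff₀ hf0]
        linarith [hge', mul_comm f (sigmaNeg r (T k))]
      · have h5 : sigmaNeg r (T k) < (y + 1/(k+1))/f := by
          rw [lt_div_iff₀ hf0]
          linarith [hlt', mul_comm (sigmaNeg r (T k)) f]
        have h6 : (y + 1/((k:ℝ)+1))/f = y/f + (1/((k:ℝ)+1))/f := by ring
        have h7 : (1/((k:ℝ)+1))/f ≤ 1/((k:ℝ)+1) := by
          apply div_le_self (by positivity) hf1
        calc sigmaNeg r (T k) < (y + 1/(k+1))/f := h5
        _ ≤ y/f + 1/((k:ℝ)+1) := by rw [h6]; linarith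
        _ < y' + ε := by rw [hy'_def]; linarith
    have h1y'' : 1 ≤ y' := by
      by_contra hcon
      push_neg at hcon
      obtain ⟨t, ⟨ht0, _⟩, _, hlt2⟩ := happrox' (1 - y') (by linarith)
      have := one_le_sigmaNeg r ht0.ne'
      linarith
    have hy'Y : y' ≤ Y := le_trans (by rw [hy'_def]; exact div_le_self (by linarith) hf1) hyY
    have hy'pow : y' ≤ (1 + η)^n := by
      rw [hy'_def, div_le_iff₀ hf0]
      have h8 : (1+η)^(n+1) = (1+η)^n * (1+η) := by ring
      have h9 : (1+η)^n * (1+η) ≤ (1+η)^n * f := by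
        apply mul_le_mul_of_nonneg_left hf_lb (by positivity)
      linarith [hpow, h8 ▸ hpow]
    have hgap' : ∀ s : ℕ, 0 < s → (∀ q, q.Prime → q ∣ s → q ∈ Q \ {p}) →
        sigmaNeg r s ≤ y' / ρ ∨ y' ≤ sigmaNeg r s := by
      intro s hs0 hsQ'
      have hps : ¬ p ∣ s := fun hps => (hsQ' p hpprime hps).2 rfl
      have hcop : (p^(a+1)).Coprime s :=
        Nat.Coprime.pow_left _ ((Nat.Prime.coprime_iff_not_dvd hpprime).mpr hps)
      have hσu : sigmaNeg r (p^(a+1) * s) = f * sigmaNeg r s := by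
        rw [sigmaNeg_mult r hcop, sigmaNeg_prime_pow r hpprime]
      have hu0 : 0 < p^(a+1) * s := Nat.mul_pos (Nat.pow_pos hpprime.pos) hs0
      have huQ : ∀ q, q.Prime → q ∣ p^(a+1) * s → q ∈ Q := by
        intro q hq hqu
        rcases (Nat.Prime.dvd_mul hq).mp hqu with h | h
        · have : q = p := (Nat.prime_dvd_prime_iff_eq hq hpprime).mp (hq.dvd_of_dvd_pow h)
          exact this ▸ hpQ
        · exact (hsQ' q hq h).1
      rcases hgap _ hu0 huQ with h | h
      · left
        rw [hσu] at h
        rw [hy'_def, div_right_comm, le_div_iff₀ hf0]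
        linarith [mul_comm f (sigmaNeg r s)]
      · right
        rw [hσu] at h
        rw [hy'_def, div_le_iff₀ hf0]
        linarith [mul_comm f (sigmaNeg r s)]
    obtain ⟨b', ⟨hb'0, hb'Q⟩, hb'σ⟩ := IH (Q \ {p}) y' h1y'' hy'Y hy'pow happrox' hgap'
    have hps : ¬ p ∣ b' := fun hps => (hb'Q p hpprime hps).2 rfl
    have hcop : (p^(a+1)).Coprime b' :=
      Nat.Coprime.pow_left _ ((Nat.Prime.coprime_iff_not_dvd hpprime).mpr hps)
    have hσb : sigmaNeg r (p^(a+1) * b') = f * y' := by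
      rw [sigmaNeg_mult r hcop, sigmaNeg_prime_pow r hpprime, hb'σ]
    have hfy : f * y' = y := by
      rw [hy'_def, mul_div_cancel₀ _ hf0.ne']
    exact absurd (hσb.trans hfy) (hatt _ ⟨Nat.mul_pos (Nat.pow_pos hpprime.pos) hb'0,
      fun q hq hqu => by
        rcases (Nat.Prime.dvd_mul hq).mp hqu with h | h
        · exact ((Nat.prime_dvd_prime_iff_eq hq hpprime).mp (hq.dvd_of_dvd_pow h)) ▸ hpQ
        · exact (hb'Q q hq h).1⟩)

theorem statement15 (r : ℝ) (hr : 1 < r) (x y : ℝ) (hxy : x < y)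
    (hx : x ∈ sigmaClosure r) (hy : y ∈ sigmaClosure r)
    (hgap : Set.Ioo x y ∩ sigmaClosure r = ∅) :
    ∃ b : ℕ, 0 < b ∧ sigmaNeg r b = y := by
  have hsub : sigmaClosure r ⊆ Set.Ici 1 := by
    apply closure_minimal _ isClosed_Ici
    rintro z ⟨n, rfl⟩
    exact one_le_sigmaNeg r n.pos.ne'
  have hx1 : 1 ≤ x := hsub hx
  have hx0 : 0 < x := by linarith
  have hy1 : 1 < y := by linarith
  set ρ : ℝ := y / x with hρ_def
  have hρ : 1 < ρ := (one_lt_div hx0).mpr hxy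
  have hyρ : y / ρ = x := by
    rw [hρ_def]
    field_simp
  have hnotmem : ∀ z ∈ sigmaClosure r, z ∉ Set.Ioo x y := by
    intro z hz hzI
    exact Set.eq_empty_iff_forall_notMem.mp hgap z ⟨hzI, hz⟩
  have hrange : ∀ s : ℕ, 0 < s → sigmaNeg r s ∈ sigmaClosure r := by
    intro s hs
    exact subset_closure ⟨⟨s, hs⟩, rfl⟩
  have hgapfn : ∀ s : ℕ, 0 < s → (∀ p, p.Prime → p ∣ s → p ∈ (Set.univ : Set ℕ)) →
      sigmaNeg r s ≤ y / ρ ∨ y ≤ sigmaNeg r s := by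
    intro s hs _
    rw [hyρ]
    rcases le_or_gt (sigmaNeg r s) x with h | h
    · exact Or.inl h
    rcases le_or_gt y (sigmaNeg r s) with h' | h'
    · exact Or.inr h'
    · exact absurd ⟨h, h'⟩ (hnotmem _ (hrange s hs))
  have happrox : ∀ ε : ℝ, 0 < ε → ∃ s : ℕ,
      (0 < s ∧ ∀ p, p.Prime → p ∣ s → p ∈ (Set.univ : Set ℕ)) ∧
      y ≤ sigmaNeg r s ∧ sigmaNeg r s < y + ε := by
    intro ε hε
    have hmin : 0 < min ε (y - x) := lt_min hε (by linarith)
    obtain ⟨z, hzr, hdist⟩ := Metric.mem_closure_iff.mp hy _ hmin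
    obtain ⟨n, rfl⟩ := hzr
    have habs : |y - sigmaNeg r (n:ℕ)| < min ε (y - x) := by
      rwa [Real.dist_eq] at hdist
    rw [abs_lt] at habs
    have hminr := min_le_right ε (y - x)
    have hminl := min_le_left ε (y - x)
    have h1 : x < sigmaNeg r (n:ℕ) := by linarith [habs.2]
    have h2 : sigmaNeg r (n:ℕ) < y + ε := by linarith [habs.1]
    have h3 : y ≤ sigmaNeg r (n:ℕ) := by
      rcases le_or_gt y (sigmaNeg r (n:ℕ)) with h | h
      · exact h
      · exact absurd ⟨h1, h⟩ (hnotmem _ (hrange (n:ℕ) n.pos))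
    exact ⟨(n:ℕ), ⟨n.pos, fun _ _ _ => Set.mem_univ _⟩, h3, h2⟩
  obtain ⟨nn, hnn⟩ := pow_unbounded_of_one_lt (y := 1 + (1 - 1/ρ) / (y + 1)) y
    (by
      have : 0 < (1 - 1/ρ) / (y + 1) := by
        apply div_pos _ (by linarith)
        have : 1/ρ < 1 := by rw [div_lt_one (by linarith)]; linarith
        linarith
      linarith)
  obtain ⟨b, ⟨hb0, _⟩, hbσ⟩ := main_lemma r ρ y hr hρ (by linarith) nn Set.univ y
    (by linarith) le_rfl hnn.le happrox hgapfn
  exact ⟨b, hb0, hbσ⟩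
end
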